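/- arXiv:cond-mat/0202339 — 7 statements merged into one kernel-verified Lean document; each statement's English description precedes it below -/
import Mathlib

section
/- Let f₀₀, f₁₀ be real numbers with f₁₀ ≠ 0 and a := -f₀₀/(2f₁₀) > 0. Define F : ℝ → ℝ by F(s) = 2·f₀₀·√a·e^{a s²}·∫_{√a·s}^{∞} e^{-t²} dt. Then for every natural number N, as s → ∞, F(s) - ∑_{n=0}^{N} (2n-1)!!·f₁₀ⁿ·f₀₀^{1-n}·s^{-2n-1} = O(s^{-2N-3}). -/
open MeasureTheory Real Filter Set

lemma intOn (x : ℝ) (hx : 0 < x) (m : ℕ) :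
    IntegrableOn (fun t => Real.exp (-t^2) / t^m) (Set.Ioi x) := by
  have hint : Integrable (fun t : ℝ => Real.exp (-t^2) / x^m) := by
    simpa using (integrable_exp_neg_mul_sq one_pos).div_const (x^m)
  refine (hint.integrableOn).mono' ?_ ?_
  · apply Measurable.aestronglyMeasurable; fun_prop
  · filter_upwards [ae_restrict_mem measurableSet_Ioi] with t ht
    have ht0 : 0 < t := hx.trans ht
    rw [Real.norm_eq_abs, abs_div, abs_of_pos (Real.exp_pos _), abs_of_pos (pow_pos ht0 m)]
    exact div_le_div_of_nonneg_left (Real.exp_pos _).le (pow_pos hx m)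
      (pow_le_pow_left₀ hx.le ht.le m)

lemma hd (k : ℕ) (t : ℝ) (ht : 0 < t) :
    HasDerivAt (fun u : ℝ => -(Real.exp (-u^2) / (2 * u^(2*k+1))))
      (Real.exp (-t^2) / t^(2*k) + ((2*(k:ℝ)+1)/2) * (Real.exp (-t^2) / t^(2*k+2))) t := by
  have h1 : HasDerivAt (fun u : ℝ => Real.exp (-u^2)) (Real.exp (-t^2) * (-2*t)) t := by
    have := ((hasDerivAt_pow 2 t).neg).exp
    simpa [mul_comm] using this
  have h2 : HasDerivAt (fun u : ℝ => (u^(2*k+1))⁻¹)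
      (-((2*k+1 : ℕ) * t^(2*k)) / (t^(2*k+1))^2) t := by
    have := (hasDerivAt_pow (2*k+1) t).inv (pow_ne_zero _ ht.ne')
    exact this.congr_deriv (by simp)
  have h3 := ((h1.mul h2).const_mul (-(1/2) : ℝ))
  refine (h3.congr_deriv ?_).congr_of_eventuallyEq (Filter.Eventually.of_forall ?_)
  swap
  · intro u; simp only [Pi.mul_apply]; ring
  · have htne : t ≠ 0 := ht.ne'
    field_simp
    push_cast
    ring

lemma step (k : ℕ) (x : ℝ) (hx : 0 < x) :
    ∫ t in Ioi x, Real.exp (-t^2) / t^(2*k) =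
      Real.exp (-x^2) / (2 * x^(2*k+1)) -
      ((2*(k:ℝ)+1)/2) * ∫ t in Ioi x, Real.exp (-t^2) / t^(2*k+2) := by
  have hint1 := intOn x hx (2*k)
  have hint2 := intOn x hx (2*k+2)
  have hintsum : IntegrableOn
      (fun t => Real.exp (-t^2) / t^(2*k) + ((2*(k:ℝ)+1)/2) * (Real.exp (-t^2) / t^(2*k+2)))
      (Ioi x) := hint1.add (hint2.const_mul _)
  have hcont : ContinuousWithinAt (fun u : ℝ => -(Real.exp (-u^2) / (2 * u^(2*k+1)))) (Ici x) x := by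
    apply ContinuousAt.continuousWithinAt
    have : (2 : ℝ) * x^(2*k+1) ≠ 0 := by positivity
    fun_prop (disch := assumption)
  have htend : Tendsto (fun u : ℝ => -(Real.exp (-u^2) / (2 * u^(2*k+1)))) atTop (nhds 0) := by
    have hsq : Tendsto (fun u : ℝ => -u^2) atTop atBot := by
      apply tendsto_neg_atBot_iff.2
      exact tendsto_pow_atTop two_ne_zero
    have h1 : Tendsto (fun u : ℝ => Real.exp (-u^2)) atTop (nhds 0) :=
      Real.tendsto_exp_atBot.comp hsq
    have h2 : Tendsto (fun u : ℝ => (2 * u^(2*k+1))⁻¹) atTop (nhds 0) := by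
      apply Tendsto.inv_tendsto_atTop
      exact (tendsto_pow_atTop (Nat.succ_ne_zero _)).const_mul_atTop two_pos
    have := (h1.mul h2).neg
    simpa [div_eq_mul_inv] using this
  have key := integral_Ioi_of_hasDerivAt_of_tendsto hcont (fun t ht => hd k t (hx.trans ht))
    hintsum htend
  rw [integral_add hint1 (hint2.const_mul _)] at key
  rw [integral_const_mul] at key
  linarith [key]

lemma expansion (N : ℕ) (x : ℝ) (hx : 0 < x) :
    ∫ t in Ioi x, Real.exp (-t^2) =
      Real.exp (-x^2) * ∑ n ∈ Finset.range (N+1),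
        (-1:ℝ)^n * (∏ i ∈ Finset.range n, (2*(i:ℝ)+1)) / (2^(n+1) * x^(2*n+1))
      + (-1:ℝ)^(N+1) * ((∏ i ∈ Finset.range (N+1), (2*(i:ℝ)+1)) / 2^(N+1)) *
        ∫ t in Ioi x, Real.exp (-t^2) / t^(2*(N+1)) := by
  induction N with
  | zero =>
    have h := step 0 x hx
    simp only [mul_zero, pow_zero, div_one] at h
    rw [h]
    simp
    ring
  | succ N ih =>
    rw [ih, step (N+1) x hx]
    have e1 : 2*(N+1+1) = 2*(N+1)+2 := by ring
    rw [e1]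
    conv_rhs => rw [Finset.sum_range_succ]
    simp only [Finset.prod_range_succ]
    push_cast
    ring

lemma tail_int (x : ℝ) : ∫ t in Ioi x, t * Real.exp (-t^2) = Real.exp (-x^2) / 2 := by
  have hint : IntegrableOn (fun t : ℝ => t * Real.exp (-t^2)) (Ioi x) := by
    have := integrable_mul_exp_neg_mul_sq (b := 1) one_pos
    simpa using this.integrableOn
  have hcont : ContinuousWithinAt (fun u : ℝ => -(Real.exp (-u^2) / 2)) (Ici x) x := by
    apply ContinuousAt.continuousWithinAt; fun_prop
  have hderiv : ∀ t ∈ Ioi x, HasDerivAt (fun u : ℝ => -(Real.exp (-u^2) / 2))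
      (t * Real.exp (-t^2)) t := by
    intro t _
    have h1 : HasDerivAt (fun u : ℝ => Real.exp (-u^2)) (Real.exp (-t^2) * (-2*t)) t := by
      have := ((hasDerivAt_pow 2 t).neg).exp
      simpa [mul_comm] using this
    have := (h1.div_const 2).neg
    exact this.congr_deriv (by ring)
  have htend : Tendsto (fun u : ℝ => -(Real.exp (-u^2) / 2)) atTop (nhds 0) := by
    have hsq : Tendsto (fun u : ℝ => -u^2) atTop atBot := by
      apply tendsto_neg_atBot_iff.2
      exact tendsto_pow_atTop two_ne_zero
    have h1 : Tendsto (fun u : ℝ => Real.exp (-u^2)) atTop (nhds 0) :=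
      Real.tendsto_exp_atBot.comp hsq
    simpa using (h1.div_const 2).neg
  have key := integral_Ioi_of_hasDerivAt_of_tendsto hcont hderiv hint htend
  rw [key]; ring

lemma rem_bound (m : ℕ) (x : ℝ) (hx : 0 < x) :
    |∫ t in Ioi x, Real.exp (-t^2) / t^(2*m+2)| ≤ Real.exp (-x^2) / (2 * x^(2*m+3)) := by
  have hint1 := intOn x hx (2*m+2)
  have hint2 : IntegrableOn (fun t : ℝ => t * Real.exp (-t^2) / x^(2*m+3)) (Ioi x) := by
    have := integrable_mul_exp_neg_mul_sq (b := 1) one_pos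
    simpa using (this.div_const (x^(2*m+3))).integrableOn
  have hnn : 0 ≤ ∫ t in Ioi x, Real.exp (-t^2) / t^(2*m+2) := by
    apply setIntegral_nonneg measurableSet_Ioi
    intro t ht
    have ht0 : 0 < t := hx.trans ht
    positivity
  rw [abs_of_nonneg hnn]
  have hle : ∫ t in Ioi x, Real.exp (-t^2) / t^(2*m+2) ≤
      ∫ t in Ioi x, t * Real.exp (-t^2) / x^(2*m+3) := by
    apply setIntegral_mono_on hint1 hint2 measurableSet_Ioi
    intro t ht
    have ht0 : 0 < t := hx.trans ht
    rw [div_le_div_iff₀ (by positivity) (by positivity)]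
    have : Real.exp (-t^2) * x^(2*m+3) ≤ Real.exp (-t^2) * t^(2*m+3) := by
      gcongr
      exact ht.le
    calc Real.exp (-t^2) * x^(2*m+3) ≤ Real.exp (-t^2) * t^(2*m+3) := this
      _ = t * Real.exp (-t^2) * t^(2*m+2) := by ring
  calc ∫ t in Ioi x, Real.exp (-t^2) / t^(2*m+2) ≤ _ := hle
    _ = (∫ t in Ioi x, t * Real.exp (-t^2)) / x^(2*m+3) := by
        rw [integral_div]
    _ = Real.exp (-x^2) / (2 * x^(2*m+3)) := by rw [tail_int]; ring

/-- Let `f00, f10` be real numbers with `f10 ≠ 0` and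
`a := -f00/(2 f10) > 0`. Define `F s = 2·f00·√a·e^{a s²}·∫_{√a·s}^{∞} e^{-t²} dt`.
Then for every natural number `N`, as `s → ∞`,
`F s - ∑_{n=0}^{N} (2n-1)!!·f10^n·f00^{1-n}·s^{-2n-1} = O(s^{-2N-3})`,
where `(2n-1)!! = ∏_{i=1}^n (2i-1)`. -/
theorem stmt_1 (f00 f10 : ℝ) (hf10 : f10 ≠ 0)
    (a : ℝ) (hadef : a = -f00 / (2 * f10)) (hapos : 0 < a)
    (F : ℝ → ℝ)
    (hF : ∀ s : ℝ, F s = 2 * f00 * Real.sqrt a * Real.exp (a * s ^ 2) *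
        ∫ t in Set.Ioi (Real.sqrt a * s), Real.exp (-t ^ 2)) :
    ∀ N : ℕ,
      (fun s : ℝ => F s - ∑ n ∈ Finset.range (N + 1),
          (∏ i ∈ Finset.range n, (2 * (i : ℝ) + 1)) * f10 ^ n * f00 ^ (1 - (n : ℤ))
            * s ^ (-2 * (n : ℤ) - 1))
        =O[Filter.atTop] fun s : ℝ => s ^ (-2 * (N : ℤ) - 3) := by
  intro N
  have ha' : (0:ℝ) < Real.sqrt a := Real.sqrt_pos.2 hapos
  have hf00 : f00 = -(2*a*f10) := by
    field_simp at hadef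
    linarith
  have hf00ne : f00 ≠ 0 := by
    intro h
    rw [h] at hadef
    simp at hadef
    linarith
  set P : ℝ := ∏ i ∈ Finset.range (N+1), (2*(i:ℝ)+1) with hP
  have hPnn : 0 ≤ P := by
    apply Finset.prod_nonneg
    intro i _
    positivity
  rw [Asymptotics.isBigO_iff]
  refine ⟨|2*f00*Real.sqrt a| * (P/2^(N+1)) * (1/(2*(Real.sqrt a)^(2*N+3))), ?_⟩
  filter_upwards [eventually_ge_atTop 1] with s hs
  have hs0 : (0:ℝ) < s := lt_of_lt_of_le one_pos hs
  have hx0 : 0 < Real.sqrt a * s := mul_pos ha' hs0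
  have hxsq : (Real.sqrt a * s)^2 = a * s^2 := by
    rw [mul_pow, Real.sq_sqrt hapos.le]
  have hexp : Real.exp (a*s^2) * Real.exp (-(Real.sqrt a * s)^2) = 1 := by
    rw [← Real.exp_add, hxsq]; simp
  -- term identity
  have key : ∀ n : ℕ,
      (2*f00*Real.sqrt a) * ((-1:ℝ)^n * (∏ i ∈ Finset.range n, (2*(i:ℝ)+1)) /
        (2^(n+1) * (Real.sqrt a * s)^(2*n+1))) =
      (∏ i ∈ Finset.range n, (2*(i:ℝ)+1)) * f10^n * f00^(1-(n:ℤ)) * s^(-2*(n:ℤ)-1) := by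
    intro n
    have hz1 : f00^(1-(n:ℤ)) = f00 / f00^n := by
      rw [zpow_sub₀ hf00ne, zpow_one, zpow_natCast]
    have hz2 : s^(-2*(n:ℤ)-1) = (s^(2*n+1))⁻¹ := by
      rw [show -2*(n:ℤ)-1 = -((2*n+1 : ℕ):ℤ) by push_cast; ring, zpow_neg, zpow_natCast]
    have hsa : (Real.sqrt a)^(2*n+1) = a^n * Real.sqrt a := by
      rw [pow_succ, pow_mul, Real.sq_sqrt hapos.le]
    have hsign : ((-2:ℝ))^n * (-1)^n = 2^n := by rw [← mul_pow]; norm_num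
    rw [hz1, hz2, mul_pow, hsa, hf00]
    field_simp
    linear_combination (-(a^n * f10^n * 2)) * hsign
  set R : ℝ := ∫ t in Ioi (Real.sqrt a * s), Real.exp (-t^2) / t^(2*N+2) with hR
  have hFs : F s - ∑ n ∈ Finset.range (N + 1),
      (∏ i ∈ Finset.range n, (2 * (i : ℝ) + 1)) * f10 ^ n * f00 ^ (1 - (n : ℤ))
        * s ^ (-2 * (n : ℤ) - 1) =
      (2*f00*Real.sqrt a) * Real.exp (a*s^2) * ((-1:ℝ)^(N+1) * (P/2^(N+1))) * R := by
    rw [hF s, expansion N (Real.sqrt a * s) hx0, show 2*(N+1) = 2*N+2 by ring, ← hR]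
    rw [mul_add, Finset.mul_sum, Finset.mul_sum]
    have : ∀ n ∈ Finset.range (N+1),
        2 * f00 * Real.sqrt a * Real.exp (a * s ^ 2) *
          (Real.exp (-(Real.sqrt a * s) ^ 2) *
            ((-1:ℝ)^n * (∏ i ∈ Finset.range n, (2*(i:ℝ)+1)) / (2^(n+1) * (Real.sqrt a * s)^(2*n+1)))) =
        (∏ i ∈ Finset.range n, (2 * (i : ℝ) + 1)) * f10 ^ n * f00 ^ (1 - (n : ℤ))
          * s ^ (-2 * (n : ℤ) - 1) := by
      intro n _
      rw [← key n]
      rw [show 2 * f00 * Real.sqrt a * Real.exp (a * s ^ 2) *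
          (Real.exp (-(Real.sqrt a * s) ^ 2) *
            ((-1:ℝ)^n * (∏ i ∈ Finset.range n, (2*(i:ℝ)+1)) / (2^(n+1) * (Real.sqrt a * s)^(2*n+1)))) =
          (Real.exp (a*s^2) * Real.exp (-(Real.sqrt a * s)^2)) *
            ((2*f00*Real.sqrt a) * ((-1:ℝ)^n * (∏ i ∈ Finset.range n, (2*(i:ℝ)+1)) /
              (2^(n+1) * (Real.sqrt a * s)^(2*n+1)))) by ring, hexp, one_mul]
    rw [Finset.sum_congr rfl this]
    ring
  rw [hFs]
  have hRb := rem_bound N (Real.sqrt a * s) hx0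
  rw [← hR] at hRb
  have hPd : (0:ℝ) ≤ P/2^(N+1) := div_nonneg hPnn (by positivity)
  have hA : |(2*f00*Real.sqrt a) * Real.exp (a*s^2) * ((-1:ℝ)^(N+1) * (P/2^(N+1)))| =
      |2*f00*Real.sqrt a| * Real.exp (a*s^2) * (P/2^(N+1)) := by
    simp [abs_mul, Real.abs_exp, abs_of_nonneg hPd, abs_pow]
  have hzn : ‖s ^ (-2*(N:ℤ)-3)‖ = (s^(2*N+3))⁻¹ := by
    rw [Real.norm_eq_abs, show -2*(N:ℤ)-3 = -((2*N+3:ℕ):ℤ) by push_cast; ring, zpow_neg,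
      zpow_natCast, abs_inv, abs_of_pos (pow_pos hs0 _)]
  have hexp2 : Real.exp (-(Real.sqrt a * s)^2) = (Real.exp (a*s^2))⁻¹ := by
    rw [hxsq, Real.exp_neg]
  calc ‖(2*f00*Real.sqrt a) * Real.exp (a*s^2) * ((-1:ℝ)^(N+1) * (P/2^(N+1))) * R‖
      = |(2*f00*Real.sqrt a) * Real.exp (a*s^2) * ((-1:ℝ)^(N+1) * (P/2^(N+1)))| * |R| := by
        rw [Real.norm_eq_abs, abs_mul]
    _ ≤ |(2*f00*Real.sqrt a) * Real.exp (a*s^2) * ((-1:ℝ)^(N+1) * (P/2^(N+1)))| *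
        (Real.exp (-(Real.sqrt a * s)^2) / (2*(Real.sqrt a * s)^(2*N+3))) :=
        mul_le_mul_of_nonneg_left hRb (abs_nonneg _)
    _ = |2*f00*Real.sqrt a| * (P/2^(N+1)) * (1/(2*(Real.sqrt a)^(2*N+3))) *
        ‖s ^ (-2*(N:ℤ)-3)‖ := by
        rw [hA, hzn, hexp2, mul_pow]
        have he : Real.exp (a*s^2) ≠ 0 := (Real.exp_pos _).ne'
        field_simp
end

section
/- Let n ≥ 1 and N ≥ 0 be natural numbers and let P be a polynomial over ℚ in the variables y₀, …, y_N, x, q. For a formal power series G in the two variables x and ε over ℚ, write G = ∑_{i≥0} gᵢ(x)·εⁱ with gᵢ(x) ∈ ℚ⟦x⟧, let Ĝⱼ denote the series obtained from G by substituting (1-ε)ʲ·x for x, and set H(G) = P(Ĝ₀, Ĝ₁, …, Ĝ_N, x, 1-ε) ∈ ℚ⟦x, ε⟧. If G and G' are two such series whose ε-coefficients gᵢ and gᵢ' agree for all i < n, then the ε^n-coefficients of H(G) and H(G') satisfy [εⁿ]H(G) - [εⁿ]H(G') = (gₙ(x) - gₙ'(x)) · (∑_{k=0}^{N} ∂_{y_k}P)(g₀(x),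 …, g₀(x), x, 1). -/
/-- The coefficient `gᵢ(x) ∈ ℚ⟦x⟧` of `εⁱ` in a formal power series
`G ∈ ℚ⟦x, ε⟧`, modelled as an element of `(ℚ⟦ε⟧)⟦x⟧`. -/
noncomputable def epsCoeff (i : ℕ) (G : PowerSeries (PowerSeries ℚ)) : PowerSeries ℚ :=
  PowerSeries.mk fun m =>
    PowerSeries.coeff i (PowerSeries.coeff m G)

/-- `H(G) = P(Ĝ₀, Ĝ₁, …, Ĝ_N, x, 1-ε)`, where `Ĝⱼ` is obtained from `G` by
substituting `(1-ε)ʲ·x` for `x`.  Variables: `Sum.inl k` is `y_k`, `Sum.inr 0`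
is `x` and `Sum.inr 1` is `q`. -/
noncomputable def qSubst (N : ℕ) (P : MvPolynomial (Fin (N + 1) ⊕ Fin 2) ℚ)
    (G : PowerSeries (PowerSeries ℚ)) : PowerSeries (PowerSeries ℚ) :=
  MvPolynomial.aeval
    (Sum.elim
      (fun k : Fin (N + 1) =>
        PowerSeries.rescale ((1 - PowerSeries.X : PowerSeries ℚ) ^ (k : ℕ)) G)
      (fun j : Fin 2 =>
        if j = 0 then PowerSeries.X
        else PowerSeries.C (1 - PowerSeries.X))) P

/-- Evaluation of a polynomial in the variables `y₀, …, y_N, x, q` at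
`(g₀(x), …, g₀(x), x, 1)`, as an element of `ℚ⟦x⟧`. -/
noncomputable def diagEval (N : ℕ) (g0 : PowerSeries ℚ)
    (Q : MvPolynomial (Fin (N + 1) ⊕ Fin 2) ℚ) : PowerSeries ℚ :=
  MvPolynomial.aeval
    (Sum.elim (fun _ : Fin (N + 1) => g0)
      (fun j : Fin 2 => if j = 0 then PowerSeries.X else 1)) Q

namespace Stmt2Aux

open PowerSeries

lemma taylor_mem {σ : Type*} [Fintype σ] [DecidableEq σ] {A : Type*} [CommRing A] [Algebra ℚ A]
    (J : Ideal A) (a b : σ → A) (hab : ∀ k, b k - a k ∈ J)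
    (P : MvPolynomial σ ℚ) :
    MvPolynomial.aeval b P - MvPolynomial.aeval a P
      - ∑ k, (b k - a k) * MvPolynomial.aeval a (MvPolynomial.pderiv k P) ∈ J * J := by
  induction P using MvPolynomial.induction_on with
  | C r => simp
  | add p q hp hq =>
      have h : (MvPolynomial.aeval b (p + q) - MvPolynomial.aeval a (p + q)
          - ∑ k, (b k - a k) * MvPolynomial.aeval a (MvPolynomial.pderiv k (p + q)))
        = (MvPolynomial.aeval b p - MvPolynomial.aeval a p
          - ∑ k, (b k - a k) * MvPolynomial.aeval a (MvPolynomial.pderiv k p))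
        + (MvPolynomial.aeval b q - MvPolynomial.aeval a q
          - ∑ k, (b k - a k) * MvPolynomial.aeval a (MvPolynomial.pderiv k q)) := by
        simp only [map_add, mul_add, Finset.sum_add_distrib]
        ring
      rw [h]; exact add_mem hp hq
  | mul_X p i hp =>
      have hJJ : J * J ≤ J := Ideal.mul_le_left
      have hΔ : MvPolynomial.aeval b p - MvPolynomial.aeval a p ∈ J := by
        have h1 : MvPolynomial.aeval b p - MvPolynomial.aeval a p
            = (MvPolynomial.aeval b p - MvPolynomial.aeval a p
              - ∑ k, (b k - a k) * MvPolynomial.aeval a (MvPolynomial.pderiv k p))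
            + ∑ k, (b k - a k) * MvPolynomial.aeval a (MvPolynomial.pderiv k p) := by ring
        rw [h1]
        exact add_mem (hJJ hp)
          (Ideal.sum_mem _ fun k _ => Ideal.mul_mem_right _ _ (hab k))
      have hterm : ∀ k, (b k - a k) *
            MvPolynomial.aeval a (MvPolynomial.pderiv k (p * MvPolynomial.X i))
          = (b k - a k) * MvPolynomial.aeval a (MvPolynomial.pderiv k p) * a i
            + (if k = i then (b i - a i) * MvPolynomial.aeval a p else 0) := by
        intro k
        rw [MvPolynomial.pderiv_mul, MvPolynomial.pderiv_X]
        rcases eq_or_ne k i with rfl | h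
        · simp [Pi.single_apply]; ring
        · simp [Pi.single_apply, Ne.symm h, h]; ring
      have hsum : ∑ k, (b k - a k) *
            MvPolynomial.aeval a (MvPolynomial.pderiv k (p * MvPolynomial.X i))
          = (∑ k, (b k - a k) * MvPolynomial.aeval a (MvPolynomial.pderiv k p)) * a i
            + (b i - a i) * MvPolynomial.aeval a p := by
        rw [Finset.sum_congr rfl fun k _ => hterm k, Finset.sum_add_distrib,
          Finset.sum_ite_eq' Finset.univ i, if_pos (Finset.mem_univ i), Finset.sum_mul]
      have hgoal : MvPolynomial.aeval b (p * MvPolynomial.X i)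
            - MvPolynomial.aeval a (p * MvPolynomial.X i)
            - ∑ k, (b k - a k) * MvPolynomial.aeval a (MvPolynomial.pderiv k (p * MvPolynomial.X i))
          = a i * (MvPolynomial.aeval b p - MvPolynomial.aeval a p
              - ∑ k, (b k - a k) * MvPolynomial.aeval a (MvPolynomial.pderiv k p))
            + (MvPolynomial.aeval b p - MvPolynomial.aeval a p) * (b i - a i) := by
        rw [hsum]
        simp only [map_mul, MvPolynomial.aeval_X]
        ring
      rw [hgoal]
      exact add_mem (Ideal.mul_mem_left _ _ hp) (Ideal.mul_mem_mul hΔ (hab i))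

noncomputable def E0 : PowerSeries (PowerSeries ℚ) →+* PowerSeries ℚ :=
  PowerSeries.map (PowerSeries.constantCoeff (R := ℚ))

lemma epsCoeff_zero (F : PowerSeries (PowerSeries ℚ)) : epsCoeff 0 F = E0 F := by
  ext m
  simp [epsCoeff, E0, coeff_map, coeff_zero_eq_constantCoeff]

lemma epsCoeff_sub (i : ℕ) (F G : PowerSeries (PowerSeries ℚ)) :
    epsCoeff i (F - G) = epsCoeff i F - epsCoeff i G := by
  ext m; simp [epsCoeff]

lemma epsCoeff_sum (i : ℕ) {α : Type*} (s : Finset α) (f : α → PowerSeries (PowerSeries ℚ)) :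
    epsCoeff i (∑ k ∈ s, f k) = ∑ k ∈ s, epsCoeff i (f k) := by
  ext m; simp [epsCoeff]

lemma rescale_C_mul (c a : PowerSeries ℚ) (f : PowerSeries (PowerSeries ℚ)) :
    PowerSeries.rescale c (PowerSeries.C a * f)
      = PowerSeries.C a * PowerSeries.rescale c f := by
  ext m
  rw [coeff_rescale, coeff_C_mul, coeff_C_mul, coeff_rescale]
  ring

lemma epsCoeff_C_pow_mul (n : ℕ) (F : PowerSeries (PowerSeries ℚ)) :
    epsCoeff n (PowerSeries.C ((PowerSeries.X : PowerSeries ℚ) ^ n) * F)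
      = epsCoeff 0 F := by
  ext m
  simp only [epsCoeff, coeff_mk, coeff_C_mul]
  simpa using PowerSeries.coeff_X_pow_mul (PowerSeries.coeff m F) n 0

lemma E0_rescale (u : PowerSeries ℚ) (hu : PowerSeries.constantCoeff u = 1)
    (f : PowerSeries (PowerSeries ℚ)) :
    E0 (PowerSeries.rescale u f) = E0 f := by
  ext m
  simp [E0, coeff_map, coeff_rescale, hu]

lemma E0_aeval {σ : Type*} (a : σ → PowerSeries (PowerSeries ℚ)) (Q : MvPolynomial σ ℚ) :
    E0 (MvPolynomial.aeval a Q) = MvPolynomial.aeval (fun k => E0 (a k)) Q := by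
  rw [MvPolynomial.aeval_def, MvPolynomial.eval₂_comp_left E0, MvPolynomial.aeval_def,
    Subsingleton.elim ((E0).comp (algebraMap ℚ (PowerSeries (PowerSeries ℚ))))
      (algebraMap ℚ (PowerSeries ℚ))]
  rfl

end Stmt2Aux

open Stmt2Aux

/-- If the `ε`-coefficients of `G` and `G'` agree below order `n`,
then `[εⁿ]H(G) - [εⁿ]H(G') = (gₙ - gₙ')·(∑_k ∂_{y_k}P)(g₀, …, g₀, x, 1)`. -/
theorem stmt_2 (n N : ℕ) (hn : 1 ≤ n)
    (P : MvPolynomial (Fin (N + 1) ⊕ Fin 2) ℚ)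
    (G G' : PowerSeries (PowerSeries ℚ))
    (hagree : ∀ i < n, epsCoeff i G = epsCoeff i G') :
    epsCoeff n (qSubst N P G) - epsCoeff n (qSubst N P G')
      = (epsCoeff n G - epsCoeff n G') *
          diagEval N (epsCoeff 0 G)
            (∑ k : Fin (N + 1), MvPolynomial.pderiv (Sum.inl k) P) := by
  classical
  set ε : PowerSeries ℚ := PowerSeries.X with hε
  set c : PowerSeries (PowerSeries ℚ) := PowerSeries.C (ε ^ n) with hc
  have hD : ∀ i < n, ∀ m, PowerSeries.coeff i (PowerSeries.coeff m (G - G')) = 0 := by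
    intro i hi m
    have h := congrArg (PowerSeries.coeff m) (hagree i hi)
    simp only [epsCoeff, PowerSeries.coeff_mk] at h
    simp [map_sub, h]
  set Dt : PowerSeries (PowerSeries ℚ) :=
    PowerSeries.mk fun m => PowerSeries.mk fun i =>
      PowerSeries.coeff (i + n) (PowerSeries.coeff m (G - G')) with hDt
  have hcD : c * Dt = G - G' := by
    ext m i
    rw [PowerSeries.coeff_C_mul, PowerSeries.coeff_X_pow_mul']
    simp only [hDt, PowerSeries.coeff_mk]
    split_ifs with h
    · have h2 : i - n + n = i := by omega
      rw [h2]
    · exact (hD i (by omega) m).symm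
  have hεG : epsCoeff n G - epsCoeff n G' = epsCoeff 0 Dt := by
    ext m
    simp [epsCoeff, hDt, map_sub]
  have hg0 : epsCoeff 0 G' = epsCoeff 0 G := (hagree 0 hn).symm
  set b : (Fin (N + 1) ⊕ Fin 2) → PowerSeries (PowerSeries ℚ) :=
    Sum.elim (fun k : Fin (N + 1) => PowerSeries.rescale ((1 - ε) ^ (k : ℕ)) G)
      (fun j : Fin 2 => if j = 0 then PowerSeries.X else PowerSeries.C (1 - ε)) with hb
  set a : (Fin (N + 1) ⊕ Fin 2) → PowerSeries (PowerSeries ℚ) :=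
    Sum.elim (fun k : Fin (N + 1) => PowerSeries.rescale ((1 - ε) ^ (k : ℕ)) G')
      (fun j : Fin 2 => if j = 0 then PowerSeries.X else PowerSeries.C (1 - ε)) with ha
  have hqG : qSubst N P G = MvPolynomial.aeval b P := rfl
  have hqG' : qSubst N P G' = MvPolynomial.aeval a P := rfl
  have hbl : ∀ k : Fin (N + 1),
      b (Sum.inl k) - a (Sum.inl k)
        = c * PowerSeries.rescale ((1 - ε) ^ (k : ℕ)) Dt := by
    intro k
    show PowerSeries.rescale _ G - PowerSeries.rescale _ G' = _
    rw [← map_sub, ← hcD, rescale_C_mul]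
  have hab : ∀ k, b k - a k ∈ Ideal.span {c} := by
    rintro (k | j)
    · rw [hbl k]
      exact Ideal.mem_span_singleton.2 ⟨_, rfl⟩
    · simp [hb, ha]
  have hTay := taylor_mem (Ideal.span {c}) a b hab P
  rw [Ideal.span_singleton_mul_span_singleton, Ideal.mem_span_singleton] at hTay
  obtain ⟨u, hu⟩ := hTay
  have hkill : epsCoeff n (MvPolynomial.aeval b P - MvPolynomial.aeval a P
      - ∑ k, (b k - a k) * MvPolynomial.aeval a (MvPolynomial.pderiv k P)) = 0 := by
    rw [hu]
    have hcc : c * c = PowerSeries.C (ε ^ (n + n)) := by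
      rw [hc, ← map_mul, ← pow_add]
    rw [hcc]
    ext m
    simp only [epsCoeff, PowerSeries.coeff_mk, PowerSeries.coeff_C_mul, hε]
    rw [PowerSeries.coeff_X_pow_mul', if_neg (by omega)]
    simp
  rw [epsCoeff_sub, epsCoeff_sub] at hkill
  have hmain : epsCoeff n (MvPolynomial.aeval b P) - epsCoeff n (MvPolynomial.aeval a P)
      = epsCoeff n (∑ k, (b k - a k) * MvPolynomial.aeval a (MvPolynomial.pderiv k P)) :=
    sub_eq_zero.mp hkill
  rw [hqG, hqG', hmain]
  have hsplit : (∑ k : Fin (N + 1) ⊕ Fin 2,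
        (b k - a k) * MvPolynomial.aeval a (MvPolynomial.pderiv k P))
      = ∑ k : Fin (N + 1), c * (PowerSeries.rescale ((1 - ε) ^ (k : ℕ)) Dt *
          MvPolynomial.aeval a (MvPolynomial.pderiv (Sum.inl k) P)) := by
    rw [Fintype.sum_sum_type]
    have h2 : ∀ j : Fin 2, (b (Sum.inr j) - a (Sum.inr j)) *
        MvPolynomial.aeval a (MvPolynomial.pderiv (Sum.inr j) P) = 0 := by
      intro j; simp [hb, ha]
    rw [Finset.sum_congr rfl fun j _ => h2 j]
    simp only [Finset.sum_const_zero, add_zero]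
    refine Finset.sum_congr rfl fun k _ => ?_
    rw [hbl k, mul_assoc]
  rw [hsplit, epsCoeff_sum]
  have hterm2 : ∀ k : Fin (N + 1),
      epsCoeff n (c * (PowerSeries.rescale ((1 - ε) ^ (k : ℕ)) Dt *
          MvPolynomial.aeval a (MvPolynomial.pderiv (Sum.inl k) P)))
      = epsCoeff 0 Dt * diagEval N (epsCoeff 0 G) (MvPolynomial.pderiv (Sum.inl k) P) := by
    intro k
    rw [hc, epsCoeff_C_pow_mul, epsCoeff_zero, map_mul]
    congr 1
    · rw [E0_rescale _ (by simp [hε]), ← epsCoeff_zero]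
    · rw [E0_aeval]
      have hpt : (fun k => E0 (a k))
          = Sum.elim (fun _ : Fin (N + 1) => epsCoeff 0 G)
              (fun j : Fin 2 => if j = 0 then PowerSeries.X else 1) := by
        funext j
        rcases j with k' | j
        · show E0 (PowerSeries.rescale _ G') = _
          rw [E0_rescale _ (by simp [hε]), ← epsCoeff_zero, hg0]
          simp
        · show E0 (if j = 0 then PowerSeries.X else PowerSeries.C (1 - ε)) = _
          simp only [Sum.elim_inr]
          split_ifs
          · simp [E0, PowerSeries.map_X]
          · simp [E0, PowerSeries.map_C, hε]
      rw [hpt]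
      rfl
  rw [Finset.sum_congr rfl fun k _ => hterm2 k, ← Finset.mul_sum, ← hεG]
  congr 1
  simp [diagEval, map_sum]
end

section
/- Let t₀ > 0 and let y : ℝ → ℝ be twice differentiable with y''(t) = t·y(t) and y(t) > 0 for all t ≥ t₀, and suppose y(t) → 0 as t → ∞. Then y'(t)/(√t · y(t)) → -1 as t → ∞. -/
open Filter Set

/-- If `g a ≤ 0` and `g' < 0` whenever `g = 0` on `[a,b]`, then `g b ≤ 0`. -/
lemma aux_stay_nonpos {g g' : ℝ → ℝ} {a b : ℝ} (hab : a ≤ b)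
    (hg : ∀ t ∈ Set.Icc a b, HasDerivAt g (g' t) t)
    (h0 : g a ≤ 0)
    (hz : ∀ t ∈ Set.Icc a b, g t = 0 → g' t < 0) :
    g b ≤ 0 := by
  by_contra hb
  push_neg at hb
  have hmem : a ∈ Set.Icc a b := Set.left_mem_Icc.2 hab
  set S : Set ℝ := {t | t ∈ Set.Icc a b ∧ g t ≤ 0} with hSdef
  have hSne : S.Nonempty := ⟨a, hmem, h0⟩
  have hSbdd : BddAbove S := ⟨b, fun t ht => ht.1.2⟩
  have hcont : ContinuousOn g (Set.Icc a b) :=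
    fun t ht => ((hg t ht).continuousAt).continuousWithinAt
  have hSclosed : IsClosed S := by
    have hEq : S = Set.Icc a b ∩ g ⁻¹' Set.Iic 0 := by
      ext t; simp [hSdef]
    rw [hEq]
    exact hcont.preimage_isClosed_of_isClosed isClosed_Icc isClosed_Iic
  set c := sSup S with hcdef
  have hcS : c ∈ S := hSclosed.csSup_mem hSne hSbdd
  have hca : a ≤ c := hcS.1.1
  have hcb : c ≤ b := hcS.1.2
  have hcb' : c < b := by
    rcases lt_or_eq_of_le hcb with h | h
    · exact h
    · exact absurd (h ▸ hcS.2) (not_le.2 hb)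
  have hright : ∀ s, c < s → s ≤ b → 0 < g s := by
    intro s hcs hsb
    by_contra hgs
    push_neg at hgs
    have hsS : s ∈ S := ⟨⟨le_trans hca hcs.le, hsb⟩, hgs⟩
    exact absurd (le_csSup hSbdd hsS) (not_le.2 hcs)
  have hc_mem : c ∈ Set.Icc a b := hcS.1
  have hcontc : ContinuousAt g c := (hg c hc_mem).continuousAt
  have htends : Filter.Tendsto g (nhdsWithin c (Set.Ioi c)) (nhds (g c)) :=
    hcontc.continuousWithinAt.tendsto
  have hev : ∀ᶠ s in nhdsWithin c (Set.Ioi c), 0 ≤ g s := by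
    filter_upwards [Ioc_mem_nhdsGT hcb'] with s hs
    exact (hright s hs.1 hs.2).le
  have hgc0 : 0 ≤ g c := ge_of_tendsto htends hev
  have hgc : g c = 0 := le_antisymm hcS.2 hgc0
  have hgd : g' c < 0 := hz c hc_mem hgc
  have hslope : Filter.Tendsto (slope g c) (nhdsWithin c (Set.Ioi c)) (nhds (g' c)) :=
    (hasDerivAt_iff_tendsto_slope.1 (hg c hc_mem)).mono_left
      (nhdsWithin_mono c (fun s hs => ne_of_gt hs))
  have hslope_neg : ∀ᶠ s in nhdsWithin c (Set.Ioi c), slope g c s < 0 :=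
    hslope.eventually (eventually_lt_nhds hgd)
  have hslope_pos : ∀ᶠ s in nhdsWithin c (Set.Ioi c), 0 < slope g c s := by
    filter_upwards [Ioc_mem_nhdsGT hcb'] with s hs
    rw [slope_def_field]
    have h1 : 0 < g s := hright s hs.1 hs.2
    have h2 : 0 < s - c := sub_pos.2 hs.1
    rw [div_eq_mul_inv]
    have : 0 < g s - g c := by rw [hgc]; linarith
    exact mul_pos this (inv_pos.2 h2)
  obtain ⟨s, h1, h2⟩ := (hslope_neg.and hslope_pos).exists
  linarith

lemma aux_stay_nonneg {g g' : ℝ → ℝ} {a b : ℝ} (hab : a ≤ b)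
    (hg : ∀ t ∈ Set.Icc a b, HasDerivAt g (g' t) t)
    (h0 : 0 ≤ g a)
    (hz : ∀ t ∈ Set.Icc a b, g t = 0 → 0 < g' t) :
    0 ≤ g b := by
  have h := aux_stay_nonpos (g := fun t => -g t) (g' := fun t => -g' t) hab
    (fun t ht => (hg t ht).neg) (by simpa using h0) ?_
  · simpa using h
  · intro t ht h'
    have : g t = 0 := by simpa [neg_eq_zero] using h'
    simpa using hz t ht this

/-- Mean value bound: if `g' ≤ -c` on `[a,b]` then `g b ≤ g a - c (b - a)`. -/
lemma aux_decay {g g' : ℝ → ℝ} {a b c : ℝ} (hab : a ≤ b)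
    (hg : ∀ t ∈ Set.Icc a b, HasDerivAt g (g' t) t)
    (hc : ∀ t ∈ Set.Icc a b, g' t ≤ -c) :
    g b ≤ g a - c * (b - a) := by
  have hder : ∀ t ∈ Set.Icc a b, HasDerivAt (fun s => g s + c * s) (g' t + c) t := by
    intro t ht
    have h1 : HasDerivAt (fun s : ℝ => c * s) (c * 1) t := (hasDerivAt_id t).const_mul c
    have h2 := (hg t ht).add h1
    simp only [mul_one] at h2
    exact h2
  have H : AntitoneOn (fun t => g t + c * t) (Set.Icc a b) := by
    apply antitoneOn_of_deriv_nonpos (convex_Icc a b)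
    · exact fun t ht => ((hder t ht).continuousAt).continuousWithinAt
    · intro t ht
      rw [interior_Icc] at ht
      exact (hder t (Ioo_subset_Icc_self ht)).differentiableAt.differentiableWithinAt
    · intro t ht
      rw [interior_Icc] at ht
      rw [(hder t (Ioo_subset_Icc_self ht)).deriv]
      have := hc t (Ioo_subset_Icc_self ht)
      linarith
  have := H (Set.left_mem_Icc.2 hab) (Set.right_mem_Icc.2 hab) hab
  simp only at this
  linarith

lemma aux_cancel {c x t1 : ℝ} (hc : c ≠ 0) : c * ((t1 + x / c) - t1) = x := by
  field_simp
  ring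

/-- Let `t₀ > 0` and let `y : ℝ → ℝ` be twice differentiable with
`y'' t = t · y t` (encoded via `yd = y'`) and `y t > 0` for all `t ≥ t₀`, and suppose
`y t → 0` as `t → ∞`. Then `y' t / (√t · y t) → -1` as `t → ∞`. -/
theorem stmt_5 (t0 : ℝ) (ht0 : 0 < t0)
    (y yd : ℝ → ℝ)
    (hy : ∀ t, HasDerivAt y (yd t) t)
    (hyd : ∀ t, HasDerivAt yd (t * y t) t)
    (hpos : ∀ t, t0 ≤ t → 0 < y t)
    (hlim : Filter.Tendsto y Filter.atTop (nhds 0)) :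
    Filter.Tendsto (fun t => yd t / (Real.sqrt t * y t)) Filter.atTop (nhds (-1)) := by
  -- Step 1 : yd < 0 on [t0, ∞)
  have hydneg : ∀ t, t0 ≤ t → yd t < 0 := by
    intro t1 ht1
    by_contra hcon
    push_neg at hcon
    -- yd is strictly increasing on [t0, ∞)
    have hydmono : StrictMonoOn yd (Set.Ici t0) := by
      apply strictMonoOn_of_deriv_pos (convex_Ici t0)
      · exact fun s _ => (hyd s).continuousAt.continuousWithinAt
      · intro s hs
        rw [interior_Ici] at hs
        rw [(hyd s).deriv]
        exact mul_pos (lt_trans ht0 hs) (hpos s (le_of_lt hs))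
    have hydpos : ∀ s, t1 < s → 0 < yd s := by
      intro s hs
      have := hydmono (Set.mem_Ici.2 ht1) (Set.mem_Ici.2 (le_trans ht1 hs.le)) hs
      linarith
    -- then y is monotone increasing on (t1, ∞)
    have hymono : StrictMonoOn y (Set.Ici (t1 + 1)) := by
      apply strictMonoOn_of_deriv_pos (convex_Ici (t1 + 1))
      · exact fun s _ => (hy s).continuousAt.continuousWithinAt
      · intro s hs
        rw [interior_Ici] at hs
        rw [(hy s).deriv]
        exact hydpos s (by linarith [Set.mem_Ioi.1 hs])
    have hy1pos : 0 < y (t1 + 1) := hpos _ (by linarith)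
    have hev : ∀ᶠ s in Filter.atTop, y s < y (t1 + 1) :=
      hlim.eventually_lt_const hy1pos
    obtain ⟨s, hs1, hs2⟩ := (hev.and (eventually_gt_atTop (t1 + 1))).exists
    have := hymono (Set.mem_Ici.2 le_rfl) (Set.mem_Ici.2 hs2.le) hs2
    linarith
  -- Step 2 : w = -yd / y is positive and solves w' = w² - t
  set w : ℝ → ℝ := fun t => -yd t / y t with hw
  have hwpos : ∀ t, t0 ≤ t → 0 < w t := by
    intro t ht
    exact div_pos (by linarith [hydneg t ht]) (hpos t ht)
  have hwderiv : ∀ t, t0 ≤ t → HasDerivAt w (w t ^ 2 - t) t := by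
    intro t ht
    have hne : y t ≠ 0 := (hpos t ht).ne'
    have h2 := ((hyd t).neg).div (hy t) hne
    refine h2.congr_deriv ?_
    simp only [hw, Pi.neg_apply]
    field_simp
    ring
  -- Step 3 : lower bound  (1-ε)√t < w t  for all t ≥ t0, 0 < ε < 1
  have hlow : ∀ ε : ℝ, 0 < ε → ε < 1 → ∀ t, t0 ≤ t → (1 - ε) * Real.sqrt t < w t := by
    intro ε hε hε1 t1 ht1
    by_contra hcon
    push_neg at hcon
    set g : ℝ → ℝ := fun s => w s - (1 - ε) * Real.sqrt s with hg
    set g' : ℝ → ℝ := fun s => (w s ^ 2 - s) - (1 - ε) * (1 / (2 * Real.sqrt s)) with hg'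
    have hgd : ∀ s, t0 ≤ s → HasDerivAt g (g' s) s := by
      intro s hs
      have hs0 : (0:ℝ) < s := lt_of_lt_of_le ht0 hs
      exact (hwderiv s hs).sub ((Real.hasDerivAt_sqrt hs0.ne').const_mul (1 - ε))
    -- invariance : w stays below (1-ε)√·
    have hinv : ∀ b, t1 ≤ b → w b ≤ (1 - ε) * Real.sqrt b := by
      intro b hb
      have h := aux_stay_nonpos hb (fun s hs => hgd s (le_trans ht1 hs.1))
        (by simp [hg]; linarith) ?_
      · simpa [hg] using h
      · intro s hs hgs
        have hst0 : t0 ≤ s := le_trans ht1 hs.1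
        have hs0 : (0:ℝ) < s := lt_of_lt_of_le ht0 hst0
        have hsq : 0 < Real.sqrt s := Real.sqrt_pos.2 hs0
        have hws : w s = (1 - ε) * Real.sqrt s := by
          have : w s - (1 - ε) * Real.sqrt s = 0 := hgs
          linarith
        have hws2 : w s ^ 2 = (1 - ε) ^ 2 * s := by
          rw [hws, mul_pow, Real.sq_sqrt hs0.le]
        show (w s ^ 2 - s) - (1 - ε) * (1 / (2 * Real.sqrt s)) < 0
        rw [hws2]
        have hcoef : (0:ℝ) < 1 - (1 - ε) ^ 2 := by nlinarith
        have h1 : (1 - ε) ^ 2 * s - s < 0 := by nlinarith [mul_pos hcoef hs0]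
        have h2 : 0 < (1 - ε) * (1 / (2 * Real.sqrt s)) :=
          mul_pos (by linarith) (by positivity)
        linarith
    -- then w decays linearly, contradiction with positivity
    set c : ℝ := (1 - (1 - ε) ^ 2) * t1 with hcdef
    have hcpos : 0 < c := by
      have ht1pos : 0 < t1 := lt_of_lt_of_le ht0 ht1
      have hcoef : (0:ℝ) < 1 - (1 - ε) ^ 2 := by nlinarith
      exact mul_pos hcoef ht1pos
    have hdecay : ∀ b, t1 ≤ b → w b ≤ w t1 - c * (b - t1) := by
      intro b hb
      apply aux_decay hb (fun s hs => hwderiv s (le_trans ht1 hs.1))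
      intro s hs
      have hst0 : t0 ≤ s := le_trans ht1 hs.1
      have hs0 : (0:ℝ) < s := lt_of_lt_of_le ht0 hst0
      have hub : w s ≤ (1 - ε) * Real.sqrt s := hinv s hs.1
      have hw0 : 0 < w s := hwpos s hst0
      have hsq2 : Real.sqrt s ^ 2 = s := Real.sq_sqrt hs0.le
      have hsq0 : 0 ≤ Real.sqrt s := Real.sqrt_nonneg s
      have hws2 : w s ^ 2 ≤ (1 - ε) ^ 2 * s := by nlinarith
      have ht1s : t1 ≤ s := hs.1
      nlinarith
    have hqpos : 0 < (w t1 + 1) / c := div_pos (by linarith [hwpos t1 ht1]) hcpos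
    have hb : t1 ≤ t1 + (w t1 + 1) / c := by linarith
    have h1 := hdecay (t1 + (w t1 + 1) / c) hb
    have h2 : c * ((t1 + (w t1 + 1) / c) - t1) = w t1 + 1 := aux_cancel hcpos.ne'
    have h3 : 0 < w (t1 + (w t1 + 1) / c) := hwpos _ (le_trans ht1 hb)
    linarith
  -- Step 4 : upper bound  w t < (1+ε)√t  eventually
  have hupp : ∀ ε : ℝ, 0 < ε → ∃ T, t0 ≤ T ∧ ∀ t, T ≤ t → w t < (1 + ε) * Real.sqrt t := by
    intro ε hε
    set δ : ℝ := (1 + ε) ^ 2 - 1 with hδdef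
    have hδ : 0 < δ := by nlinarith
    set T : ℝ := max t0 (max 1 ((1 + ε) / (2 * δ) + 1)) with hTdef
    have hTt0 : t0 ≤ T := le_max_left _ _
    have hT1 : (1:ℝ) ≤ T := le_trans (le_max_left _ _) (le_max_right _ _)
    have hTδ : (1 + ε) / (2 * δ) + 1 ≤ T := le_trans (le_max_right _ _) (le_max_right _ _)
    refine ⟨T, hTt0, ?_⟩
    intro t1 ht1
    by_contra hcon
    push_neg at hcon
    set g : ℝ → ℝ := fun s => w s - (1 + ε) * Real.sqrt s with hg
    set g' : ℝ → ℝ := fun s => (w s ^ 2 - s) - (1 + ε) * (1 / (2 * Real.sqrt s)) with hg'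
    have hgd : ∀ s, t0 ≤ s → HasDerivAt g (g' s) s := by
      intro s hs
      have hs0 : (0:ℝ) < s := lt_of_lt_of_le ht0 hs
      exact (hwderiv s hs).sub ((Real.hasDerivAt_sqrt hs0.ne').const_mul (1 + ε))
    have hinv : ∀ b, t1 ≤ b → (1 + ε) * Real.sqrt b ≤ w b := by
      intro b hb
      have h := aux_stay_nonneg hb
        (fun s hs => hgd s (le_trans (le_trans hTt0 ht1) hs.1))
        (by simp [hg]; linarith) ?_
      · have : (0:ℝ) ≤ w b - (1 + ε) * Real.sqrt b := by simpa [hg] using h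
        linarith
      · intro s hs hgs
        have hsT : T ≤ s := le_trans ht1 hs.1
        have hs0 : (0:ℝ) < s := lt_of_lt_of_le (lt_of_lt_of_le ht0 hTt0) hsT
        have hsq1 : (1:ℝ) ≤ Real.sqrt s := by
          rw [show (1:ℝ) = Real.sqrt 1 by simp]
          exact Real.sqrt_le_sqrt (le_trans hT1 hsT)
        have hws : w s = (1 + ε) * Real.sqrt s := by
          have : w s - (1 + ε) * Real.sqrt s = 0 := hgs
          linarith
        have hws2 : w s ^ 2 = (1 + ε) ^ 2 * s := by
          rw [hws, mul_pow, Real.sq_sqrt hs0.le]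
        show (0:ℝ) < (w s ^ 2 - s) - (1 + ε) * (1 / (2 * Real.sqrt s))
        rw [hws2]
        have h1 : δ * s ≥ (1 + ε) / 2 + δ := by
          have hsδ : (1 + ε) / (2 * δ) + 1 ≤ s := le_trans hTδ hsT
          have := mul_le_mul_of_nonneg_left hsδ hδ.le
          have hδne : δ ≠ 0 := hδ.ne'
          calc (1 + ε) / 2 + δ = δ * ((1 + ε) / (2 * δ) + 1) := by field_simp
          _ ≤ δ * s := this
        have h2 : (1 + ε) * (1 / (2 * Real.sqrt s)) ≤ (1 + ε) / 2 := by
          have hhalf : 1 / (2 * Real.sqrt s) ≤ 1 / 2 := by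
            rw [div_le_div_iff₀ (by positivity) (by norm_num)]
            linarith
          have := mul_le_mul_of_nonneg_left hhalf (by linarith : (0:ℝ) ≤ 1 + ε)
          linarith
        have h3 : (1 + ε) ^ 2 * s - s = δ * s := by rw [hδdef]; ring
        linarith
    -- 1/w decays linearly, contradiction
    set φ : ℝ → ℝ := fun s => (w s)⁻¹ with hφ
    have hφd : ∀ s, t1 ≤ s → HasDerivAt φ (-(w s ^ 2 - s) / (w s) ^ 2) s := by
      intro s hs
      have hst0 : t0 ≤ s := le_trans (le_trans hTt0 ht1) hs
      exact (hwderiv s hst0).inv (hwpos s hst0).ne'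
    set c : ℝ := 1 - ((1 + ε) ^ 2)⁻¹ with hcdef
    have hA : (0:ℝ) < (1 + ε) ^ 2 := by positivity
    have hcpos : 0 < c := by
      rw [hcdef]
      have : ((1 + ε) ^ 2)⁻¹ < 1 := by
        rw [inv_lt_one_iff₀]
        right; nlinarith
      linarith
    have hdecay : ∀ b, t1 ≤ b → φ b ≤ φ t1 - c * (b - t1) := by
      intro b hb
      apply aux_decay hb (fun s hs => hφd s hs.1)
      intro s hs
      have hst0 : t0 ≤ s := le_trans (le_trans hTt0 ht1) hs.1
      have hs0 : (0:ℝ) < s := lt_of_lt_of_le ht0 hst0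
      have hlb : (1 + ε) * Real.sqrt s ≤ w s := hinv s hs.1
      have hsq2 : Real.sqrt s ^ 2 = s := Real.sq_sqrt hs0.le
      have hsq0 : 0 ≤ Real.sqrt s := Real.sqrt_nonneg s
      have hw0 : 0 < w s := hwpos s hst0
      have hws2 : (1 + ε) ^ 2 * s ≤ w s ^ 2 := by
        have hmul := mul_le_mul hlb hlb (mul_nonneg (by linarith) hsq0) hw0.le
        nlinarith [hmul, hsq2]
      rw [div_le_iff₀ (by positivity)]
      have hAinv : ((1 + ε) ^ 2)⁻¹ * (1 + ε) ^ 2 = 1 := inv_mul_cancel₀ hA.ne'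
      have key : s ≤ ((1 + ε) ^ 2)⁻¹ * w s ^ 2 := by
        have := mul_le_mul_of_nonneg_left hws2 (inv_nonneg.2 hA.le)
        calc s = ((1 + ε) ^ 2)⁻¹ * ((1 + ε) ^ 2 * s) := by
                rw [← mul_assoc, hAinv, one_mul]
        _ ≤ ((1 + ε) ^ 2)⁻¹ * w s ^ 2 := this
      have hrw : -c * w s ^ 2 = ((1 + ε) ^ 2)⁻¹ * w s ^ 2 - w s ^ 2 := by
        rw [hcdef]; ring
      rw [hrw]
      linarith
    have hφt1pos : 0 < φ t1 := inv_pos.2 (hwpos t1 (le_trans hTt0 ht1))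
    have hqpos : 0 < (φ t1 + 1) / c := div_pos (by linarith) hcpos
    have hb : t1 ≤ t1 + (φ t1 + 1) / c := by linarith
    have h1 := hdecay (t1 + (φ t1 + 1) / c) hb
    have h2 : c * ((t1 + (φ t1 + 1) / c) - t1) = φ t1 + 1 := aux_cancel hcpos.ne'
    have h3 : 0 < φ (t1 + (φ t1 + 1) / c) :=
      inv_pos.2 (hwpos _ (le_trans (le_trans hTt0 ht1) hb))
    linarith
  -- Step 5 : w t / √t → 1
  have hmain : Filter.Tendsto (fun t => w t / Real.sqrt t) Filter.atTop (nhds 1) := by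
    rw [Metric.tendsto_nhds]
    intro ε hε
    set ε' : ℝ := min (ε / 2) (1 / 2) with hε'def
    have hε'pos : 0 < ε' := lt_min (by linarith) (by norm_num)
    have hε'lt1 : ε' < 1 := lt_of_le_of_lt (min_le_right _ _) (by norm_num)
    have hε'ε : ε' < ε := lt_of_le_of_lt (min_le_left _ _) (by linarith)
    obtain ⟨T, hT0, hTupp⟩ := hupp ε' hε'pos
    filter_upwards [eventually_ge_atTop (max T 1)] with t ht
    have htT : T ≤ t := le_trans (le_max_left _ _) ht
    have ht1 : (1:ℝ) ≤ t := le_trans (le_max_right _ _) ht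
    have ht0' : t0 ≤ t := le_trans hT0 htT
    have hst : 0 < Real.sqrt t := Real.sqrt_pos.2 (by linarith)
    have h1 : (1 - ε') * Real.sqrt t < w t := hlow ε' hε'pos hε'lt1 t ht0'
    have h2 : w t < (1 + ε') * Real.sqrt t := hTupp t htT
    have hL : 1 - ε' < w t / Real.sqrt t := by
      rw [lt_div_iff₀ hst]; linarith
    have hU : w t / Real.sqrt t < 1 + ε' := by
      rw [div_lt_iff₀ hst]; linarith
    rw [Real.dist_eq, abs_lt]
    constructor <;> linarith
  -- Step 6 : conclude
  have hfinal : Filter.Tendsto (fun t => -(w t / Real.sqrt t)) Filter.atTop (nhds (-1)) :=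
    hmain.neg
  apply hfinal.congr'
  filter_upwards [eventually_ge_atTop (max t0 1)] with t ht
  have ht0' : t0 ≤ t := le_trans (le_max_left _ _) ht
  have ht1 : (1:ℝ) ≤ t := le_trans (le_max_right _ _) ht
  have hyt : 0 < y t := hpos t ht0'
  have hst : 0 < Real.sqrt t := Real.sqrt_pos.2 (by linarith)
  simp only [hw]
  rw [div_div, neg_div, neg_neg, mul_comm (y t) (Real.sqrt t)]
end

section
/- Let f₀₀, f₁₀ be real numbers with f₁₀ ≠ 0 and a := -f₀₀/(2f₁₀) > 0. Define F : ℝ → ℝ by F(s) = 2·f₀₀·√a·e^{a s²}·∫_{√a·s}^{∞} e^{-t²} dt. Then for every real s, s·F(s) + (f₁₀/f₀₀)·F'(s) - f₀₀ = 0. -/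
open MeasureTheory Real

lemma gauss_integrable : Integrable (fun t : ℝ => Real.exp (-t ^ 2)) := by
  have := integrable_exp_neg_mul_sq (b := 1) one_pos
  simpa using this

lemma gauss_hasDerivAt (x : ℝ) :
    HasDerivAt (fun x : ℝ => ∫ t in Set.Ioi x, Real.exp (-t ^ 2))
      (-Real.exp (-x ^ 2)) x := by
  have hint := gauss_integrable
  have key : ∀ y : ℝ, (∫ t in Set.Ioi y, Real.exp (-t ^ 2)) =
      (∫ t : ℝ, Real.exp (-t ^ 2)) - ((∫ t in Set.Iic (0:ℝ), Real.exp (-t ^ 2))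
        + ∫ t in (0:ℝ)..y, Real.exp (-t ^ 2)) := by
    intro y
    rw [← intervalIntegral.integral_Iic_sub_Iic hint.integrableOn hint.integrableOn]
    have : (∫ t : ℝ, Real.exp (-t ^ 2)) =
        (∫ t in Set.Iic y, Real.exp (-t ^ 2)) + ∫ t in Set.Ioi y, Real.exp (-t ^ 2) := by
      rw [← setIntegral_union (Set.Iic_disjoint_Ioi le_rfl) measurableSet_Ioi
        hint.integrableOn hint.integrableOn, Set.Iic_union_Ioi,
        MeasureTheory.setIntegral_univ]
    linarith
  have hd : HasDerivAt (fun y : ℝ => ∫ t in (0:ℝ)..y, Real.exp (-t ^ 2))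
      (Real.exp (-x ^ 2)) x := by
    exact intervalIntegral.integral_hasDerivAt_right hint.intervalIntegrable
      (Continuous.aestronglyMeasurable (by continuity)).stronglyMeasurableAtFilter
      (Continuous.continuousAt (by continuity))
  have : HasDerivAt (fun y : ℝ => (∫ t : ℝ, Real.exp (-t ^ 2)) -
      ((∫ t in Set.Iic (0:ℝ), Real.exp (-t ^ 2)) + ∫ t in (0:ℝ)..y, Real.exp (-t ^ 2)))
      (-Real.exp (-x ^ 2)) x := by
    simpa using ((hd.const_add _).const_sub _)
  exact this.congr_of_eventuallyEq (Filter.Eventually.of_forall key)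

/-- Let `f00, f10 ∈ ℝ` with `f10 ≠ 0` and `a := -f00/(2 f10) > 0`.
Define `F s = 2·f00·√a·e^{a s²}·∫_{√a·s}^{∞} e^{-t²} dt`. Then for every real `s`,
`s·F s + (f10/f00)·F' s - f00 = 0`. -/
theorem stmt_6 (f00 f10 : ℝ) (hf10 : f10 ≠ 0)
    (a : ℝ) (hadef : a = -f00 / (2 * f10)) (hapos : 0 < a)
    (F : ℝ → ℝ)
    (hF : ∀ s : ℝ, F s = 2 * f00 * Real.sqrt a * Real.exp (a * s ^ 2) *
        ∫ t in Set.Ioi (Real.sqrt a * s), Real.exp (-t ^ 2)) :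
    ∀ s : ℝ, s * F s + (f10 / f00) * deriv F s - f00 = 0 := by
  intro s
  have hf00 : f00 ≠ 0 := by
    intro h; rw [h] at hadef; simp at hadef; rw [hadef] at hapos; exact lt_irrefl _ hapos
  have hsa : Real.sqrt a ^ 2 = a := Real.sq_sqrt hapos.le
  -- derivative of F
  have hG : HasDerivAt (fun y : ℝ => ∫ t in Set.Ioi (Real.sqrt a * y), Real.exp (-t ^ 2))
      (Real.sqrt a * -Real.exp (-(Real.sqrt a * s) ^ 2)) s := by
    have := (gauss_hasDerivAt (Real.sqrt a * s)).comp s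
      ((hasDerivAt_id s).const_mul (Real.sqrt a))
    convert this using 1
    · rfl
    · rfl
    · rfl
    · ring
  have hE : HasDerivAt (fun y : ℝ => Real.exp (a * y ^ 2))
      (Real.exp (a * s ^ 2) * (a * (2 * s))) s := by
    have h1 : HasDerivAt (fun y : ℝ => a * y ^ 2) (a * (2 * s)) s := by
      simpa using ((hasDerivAt_pow 2 s).const_mul a)
    exact h1.exp
  have hFd : HasDerivAt F
      (2 * f00 * Real.sqrt a *
        (Real.exp (a * s ^ 2) * (a * (2 * s)) *
          (∫ t in Set.Ioi (Real.sqrt a * s), Real.exp (-t ^ 2)) +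
         Real.exp (a * s ^ 2) * (Real.sqrt a * -Real.exp (-(Real.sqrt a * s) ^ 2)))) s := by
    have := ((hE.mul hG).const_mul (2 * f00 * Real.sqrt a))
    refine HasDerivAt.congr_of_eventuallyEq ?_ (Filter.Eventually.of_forall fun y => (hF y))
    convert this using 2
    · rfl
    rw [Pi.mul_apply]; ring
  rw [hFd.deriv, hF s]
  have hexp : Real.exp (a * s ^ 2) * Real.exp (-(Real.sqrt a * s) ^ 2) = 1 := by
    rw [← Real.exp_add]
    have : a * s ^ 2 + -(Real.sqrt a * s) ^ 2 = 0 := by rw [mul_pow, hsa]; ring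
    rw [this, Real.exp_zero]
  have ha2 : a * (f10 / f00) = -(1:ℝ)/2 := by
    field_simp [hadef]
    rw [hadef]; field_simp
  -- expand
  set I := ∫ t in Set.Ioi (Real.sqrt a * s), Real.exp (-t ^ 2) with hI
  have expand : s * (2 * f00 * Real.sqrt a * Real.exp (a * s ^ 2) * I) +
      (f10 / f00) * (2 * f00 * Real.sqrt a *
        (Real.exp (a * s ^ 2) * (a * (2 * s)) * I +
         Real.exp (a * s ^ 2) * (Real.sqrt a * -Real.exp (-(Real.sqrt a * s) ^ 2)))) - f00
      = (2 * f00 * Real.sqrt a * Real.exp (a * s ^ 2) * I * s) * (1 + 2 * (a * (f10/f00)))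
        - (f10/f00) * 2 * f00 * (Real.sqrt a * Real.sqrt a) *
            (Real.exp (a * s ^ 2) * Real.exp (-(Real.sqrt a * s) ^ 2)) - f00 := by
    ring
  rw [expand, ha2, hexp, Real.mul_self_sqrt hapos.le]
  have : a * (f10 / f00) * 2 = -1 := by rw [ha2]; ring
  field_simp [hadef]
  rw [hadef]; field_simp; ring
end

section
/- In the ring ℚ[q]⟦x⟧ of formal power series in x with coefficients in the polynomial ring ℚ[q], let G = ∑_{m≥1} ∑_{n≥1} q^{m·n}·x^{m+n}, and let G(qx) denote the series obtained from G by the substitution x ↦ q·x. Then q·x²·(1 - q·x)·G(qx) - (1 - q·x)·G + q·x²·(1 + q·x) = 0. -/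
open scoped PowerSeries

/-- The half-perimeter and area generating function of rectangles,
`G = ∑_{m≥1} ∑_{n≥1} q^{m·n}·x^{m+n}`, as a formal power series in `x` with
coefficients in `ℚ[q]`: the coefficient of `x^k` is `∑_{m=1}^{k-1} q^{m·(k-m)}`. -/
noncomputable def rectGF : PowerSeries (Polynomial ℚ) :=
  PowerSeries.mk fun k => ∑ m ∈ Finset.Ioo 0 k, (Polynomial.X : Polynomial ℚ) ^ (m * (k - m))

noncomputable def gR (n : ℕ) : Polynomial ℚ :=
  ∑ i ∈ Finset.range n, (Polynomial.X : Polynomial ℚ) ^ ((i + 1) * (n - i))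

lemma coeff_rectGF (k : ℕ) :
    PowerSeries.coeff (R := Polynomial ℚ) k rectGF = gR (k - 1) := by
  rw [rectGF, PowerSeries.coeff_mk, gR]
  apply Finset.sum_nbij' (fun m => m - 1) (fun i => i + 1)
  · intro m hm; simp only [Finset.mem_Ioo] at hm; simp [Finset.mem_range]; omega
  · intro i hi; simp only [Finset.mem_range] at hi; simp [Finset.mem_Ioo]; omega
  · intro m hm; simp only [Finset.mem_Ioo] at hm; omega
  · intro i hi; omega
  · intro m hm; simp only [Finset.mem_Ioo] at hm
    rw [show m - 1 + 1 = m from by omega, show k - 1 - (m - 1) = k - m from by omega]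

lemma gR_key (j : ℕ) :
    gR (j + 2) = Polynomial.X ^ (j + 2) * gR j + 2 * Polynomial.X ^ (j + 2) := by
  rw [gR, Finset.sum_range_succ, Finset.sum_range_succ', gR, Finset.mul_sum]
  have h1 : ∀ i ∈ Finset.range j,
      (Polynomial.X : Polynomial ℚ) ^ ((i + 1 + 1) * (j + 2 - (i + 1)))
        = Polynomial.X ^ (j + 2) * Polynomial.X ^ ((i + 1) * (j - i)) := by
    intro i hi
    simp only [Finset.mem_range] at hi
    rw [← pow_add]
    congr 1
    obtain ⟨d, rfl⟩ : ∃ d, j = i + d + 1 := ⟨j - i - 1, by omega⟩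
    have e1 : i + d + 1 + 2 - (i + 1) = d + 2 := by omega
    have e2 : i + d + 1 - i = d + 1 := by omega
    rw [e1, e2]; ring
  rw [Finset.sum_congr rfl h1]
  have e3 : j + 2 - (j + 1) = 1 := by omega
  have e4 : (0 : ℕ) + 1 = 1 := rfl
  rw [e3]
  ring_nf
  simp [Nat.add_sub_cancel]
  ring

/-- With `G` the rectangle generating function and `G(qx)` obtained
from `G` by the substitution `x ↦ q·x`, we have
`q·x²·(1 - q·x)·G(qx) - (1 - q·x)·G + q·x²·(1 + q·x) = 0` in `ℚ[q]⟦x⟧`. -/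
theorem stmt_13 :
    PowerSeries.C (R := Polynomial ℚ) Polynomial.X * PowerSeries.X ^ 2 *
        (1 - PowerSeries.C (R := Polynomial ℚ) Polynomial.X * PowerSeries.X) *
        PowerSeries.rescale Polynomial.X rectGF
      - (1 - PowerSeries.C (R := Polynomial ℚ) Polynomial.X * PowerSeries.X) * rectGF
      + PowerSeries.C (R := Polynomial ℚ) Polynomial.X * PowerSeries.X ^ 2 *
        (1 + PowerSeries.C (R := Polynomial ℚ) Polynomial.X * PowerSeries.X) = 0 := by
  have h : PowerSeries.C (R := Polynomial ℚ) Polynomial.X * PowerSeries.X ^ 2 *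
        (1 - PowerSeries.C (R := Polynomial ℚ) Polynomial.X * PowerSeries.X) *
        PowerSeries.rescale Polynomial.X rectGF
      - (1 - PowerSeries.C (R := Polynomial ℚ) Polynomial.X * PowerSeries.X) * rectGF
      + PowerSeries.C (R := Polynomial ℚ) Polynomial.X * PowerSeries.X ^ 2 *
        (1 + PowerSeries.C (R := Polynomial ℚ) Polynomial.X * PowerSeries.X)
      = (PowerSeries.C (R := Polynomial ℚ) Polynomial.X * PowerSeries.rescale Polynomial.X rectGF)
          * PowerSeries.X ^ 2
        - (PowerSeries.C (R := Polynomial ℚ) (Polynomial.X * Polynomial.X) *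
            PowerSeries.rescale Polynomial.X rectGF) * PowerSeries.X ^ 3
        - rectGF
        + (PowerSeries.C (R := Polynomial ℚ) Polynomial.X * rectGF) * PowerSeries.X ^ 1
        + PowerSeries.C (R := Polynomial ℚ) Polynomial.X * PowerSeries.X ^ 2
        + PowerSeries.C (R := Polynomial ℚ) (Polynomial.X * Polynomial.X) * PowerSeries.X ^ 3 := by
    simp only [map_mul]; ring
  rw [h]
  refine PowerSeries.ext fun k => ?_
  simp only [map_add, map_sub, PowerSeries.coeff_mul_X_pow',
    PowerSeries.coeff_C_mul, PowerSeries.coeff_rescale, coeff_rectGF, map_zero,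
    PowerSeries.coeff_C]
  match k with
  | 0 => norm_num [gR]
  | 1 => norm_num [gR]
  | 2 => norm_num [gR, Finset.sum_range_succ]
  | 3 => norm_num [gR, Finset.sum_range_succ]; ring
  | (j + 4) =>
    simp only [if_pos (show (1:ℕ) ≤ j + 4 by omega), if_pos (show (2:ℕ) ≤ j + 4 by omega),
      if_pos (show (3:ℕ) ≤ j + 4 by omega), if_neg (show ¬(j + 4 - 2 = 0) by omega),
      if_neg (show ¬(j + 4 - 3 = 0) by omega), if_neg (show ¬(j + 2 = 0) by omega),
      if_neg (show ¬(j + 1 = 0) by omega),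
      show j + 4 - 2 = j + 2 from by omega, show j + 4 - 3 = j + 1 from by omega,
      show j + 4 - 1 = j + 3 from by omega, show j + 2 - 1 = j + 1 from by omega,
      show j + 1 - 1 = j from by omega, show j + 3 - 1 = j + 2 from by omega]
    rw [show j + 3 = (j + 1) + 2 from by ring, gR_key (j + 1), gR_key j]
    ring
end

section
/- In the ring ℚ[q]⟦x⟧ of formal power series in x with coefficients in the polynomial ring ℚ[q], let G = ∑_{λ} q^{|λ|}·x^{ℓ(λ)+λ₁}, where the sum is over all nonempty integer partitions λ, with |λ| the sum of the parts, ℓ(λ) the number of parts, and λ₁ the largest part; let G(qx) denote the series obtained from G by the substitution x ↦ q·x. Then q·x²·G(qx) - (1 - q·x)²·G + q·x² = 0. -/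
/-- The half-perimeter and area generating function of Ferrers diagrams,
`G = ∑_λ q^{|λ|}·x^{ℓ(λ)+λ₁}`, the sum being over all nonempty integer
partitions `λ`, as a formal power series in `x` with coefficients in `ℚ[q]`:
the coefficient of `x^k` is `∑_j #{λ ⊢ j : ℓ(λ) + λ₁ = k}·q^j` (a finite sum,
since `ℓ(λ)·λ₁ ≥ |λ|` forces `|λ| ≤ k²`). -/
noncomputable def ferrersGF : PowerSeries (Polynomial ℚ) :=
  PowerSeries.mk fun k =>
    ∑ j ∈ Finset.Icc 1 (k * k),
      ((Finset.univ.filter fun lam : Nat.Partition j =>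
          Multiset.card lam.parts + lam.parts.sup = k).card : ℚ) •
        (Polynomial.X : Polynomial ℚ) ^ j

namespace Stmt14Aux

open Finset Polynomial

def A (k j : ℕ) : ℕ :=
  (Finset.univ.filter fun lam : Nat.Partition j =>
      Multiset.card lam.parts + lam.parts.sup = k).card

noncomputable def gp (k : ℕ) : Polynomial ℚ :=
  ∑ j ∈ Finset.Icc 1 (k * k), (A k j : ℚ) • (Polynomial.X : Polynomial ℚ) ^ j

lemma coeffG (n : ℕ) : PowerSeries.coeff n ferrersGF = gp n := by
  rw [ferrersGF, PowerSeries.coeff_mk]; rfl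

lemma sup_mem {s : Multiset ℕ} (h : s ≠ 0) : s.sup ∈ s := by
  induction s using Multiset.induction_on with
  | empty => simp at h
  | cons a s ih =>
    rw [Multiset.sup_cons]
    rcases eq_or_ne s 0 with rfl | hs
    · simp
    · rcases le_total a s.sup with h1 | h1
      · rw [sup_eq_right.mpr h1]; exact Multiset.mem_cons_of_mem (ih hs)
      · rw [sup_eq_left.mpr h1]; exact Multiset.mem_cons_self a s

lemma sup_cons_of_le {a : ℕ} {t : Multiset ℕ} (h : ∀ x ∈ t, x ≤ a) :
    (a ::ₘ t).sup = a := by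
  rw [Multiset.sup_cons]
  exact sup_eq_left.mpr (Multiset.sup_le.mpr h)

lemma parts_ne {n k : ℕ} (lam : Nat.Partition n)
    (h : Multiset.card lam.parts + lam.parts.sup = k) (hk : 1 ≤ k) :
    lam.parts ≠ 0 := by
  intro h0; rw [h0] at h; simp at h; omega

lemma sup_pos {n : ℕ} (lam : Nat.Partition n) (h : lam.parts ≠ 0) :
    1 ≤ lam.parts.sup :=
  lam.parts_pos (sup_mem h)

lemma sum_eq {n : ℕ} (lam : Nat.Partition n) (h : lam.parts ≠ 0) :
    lam.parts.sup + (lam.parts.erase lam.parts.sup).sum = n := by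
  rw [← Multiset.sum_cons, Multiset.cons_erase (sup_mem h), lam.parts_sum]

lemma card_eq {n : ℕ} (lam : Nat.Partition n) (h : lam.parts ≠ 0) :
    1 + Multiset.card (lam.parts.erase lam.parts.sup) = Multiset.card lam.parts := by
  rw [add_comm, ← Multiset.card_cons, Multiset.cons_erase (sup_mem h)]

lemma notmem_erase_sup {s : Multiset ℕ} (hc : s.count s.sup = 1) :
    s.sup ∉ s.erase s.sup := by
  rw [← Multiset.count_pos, Multiset.count_erase_self, hc]
  simp

lemma erase_sup_le {s : Multiset ℕ} (hc : s.count s.sup = 1) :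
    ∀ x ∈ s.erase s.sup, x ≤ s.sup - 1 := by
  intro x hx
  have h1 : x ≤ s.sup := Multiset.le_sup (Multiset.mem_of_mem_erase hx)
  have h2 : x ≠ s.sup := fun h => notmem_erase_sup hc (h ▸ hx)
  omega

lemma erase_le_sup {s : Multiset ℕ} : ∀ x ∈ s.erase s.sup, x ≤ s.sup :=
  fun _ hx => Multiset.le_sup (Multiset.mem_of_mem_erase hx)

lemma sup_two {n m : ℕ} (lam : Nat.Partition n)
    (hk : Multiset.card lam.parts + lam.parts.sup = m + 3)
    (hc : lam.parts.count lam.parts.sup = 1) : 2 ≤ lam.parts.sup := by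
  have hne : lam.parts ≠ 0 := parts_ne lam hk (by omega)
  have h1 := sup_pos lam hne
  by_contra h
  have hall : ∀ b ∈ lam.parts, lam.parts.sup = b := by
    intro b hb
    have := lam.parts_pos hb
    have := Multiset.le_sup hb
    omega
  rw [Multiset.count_eq_card.mpr hall] at hc
  omega

lemma card_two {n m : ℕ} (lam : Nat.Partition n)
    (hk : Multiset.card lam.parts + lam.parts.sup = m + 3)
    (h1 : 1 ∈ lam.parts) : 2 ≤ Multiset.card lam.parts := by
  by_contra h
  have hpos : 0 < Multiset.card lam.parts := Multiset.card_pos.mpr (by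
    intro h0; rw [h0] at h1; simp at h1)
  have hcard : Multiset.card lam.parts = 1 := by omega
  obtain ⟨a, ha⟩ := Multiset.card_eq_one.mp hcard
  rw [ha] at h1 hk
  rw [Multiset.mem_singleton] at h1
  subst h1
  simp at hk

lemma sup_erase_one {n : ℕ} (lam : Nat.Partition n) (h1 : 1 ∈ lam.parts)
    (h2 : 2 ≤ Multiset.card lam.parts) :
    (lam.parts.erase 1).sup = lam.parts.sup := by
  have he : lam.parts.erase 1 ≠ 0 := by
    rw [← Multiset.card_pos, Multiset.card_erase_of_mem h1, Nat.pred_eq_sub_one]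
    omega
  obtain ⟨b, hb⟩ := Multiset.exists_mem_of_ne_zero he
  have hbpos := lam.parts_pos (Multiset.mem_of_mem_erase hb)
  have hbe : b ≤ (lam.parts.erase 1).sup := Multiset.le_sup hb
  conv_rhs => rw [← Multiset.cons_erase h1]
  rw [Multiset.sup_cons]
  exact (sup_eq_right.mpr (by omega)).symm

def delOne {n : ℕ} (lam : Nat.Partition (n+1)) (h : 1 ∈ lam.parts) :
    Nat.Partition n where
  parts := lam.parts.erase 1
  parts_pos := fun hi => lam.parts_pos (Multiset.mem_of_mem_erase hi)
  parts_sum := by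
    have : (1 : ℕ) + (lam.parts.erase 1).sum = n + 1 := by
      rw [← Multiset.sum_cons, Multiset.cons_erase h, lam.parts_sum]
    omega

def addOne {n : ℕ} (lam : Nat.Partition n) : Nat.Partition (n+1) where
  parts := 1 ::ₘ lam.parts
  parts_pos := by
    intro i hi
    rcases Multiset.mem_cons.mp hi with rfl | hi
    · omega
    · exact lam.parts_pos hi
  parts_sum := by rw [Multiset.sum_cons, lam.parts_sum, add_comm]

lemma cardC (m t : ℕ) :
    ((Finset.univ : Finset (Nat.Partition (t+2))).filter fun lam =>
      (Multiset.card lam.parts + lam.parts.sup = m+3) ∧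
        1 ∈ lam.parts).card = A (m+2) (t+1) := by
  rw [A]
  refine Finset.card_bij'
    (fun lam hl => delOne lam (Finset.mem_filter.mp hl).2.2)
    (fun mu _ => addOne mu) ?_ ?_ ?_ ?_
  · intro lam hl
    obtain ⟨-, hk, h1⟩ := Finset.mem_filter.mp hl
    have h2 := card_two lam hk h1
    refine Finset.mem_filter.mpr ⟨Finset.mem_univ _, ?_⟩
    show Multiset.card (lam.parts.erase 1) + (lam.parts.erase 1).sup = m + 2
    rw [sup_erase_one lam h1 h2, Multiset.card_erase_of_mem h1, Nat.pred_eq_sub_one]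
    omega
  · intro mu hm
    obtain ⟨-, hk⟩ := Finset.mem_filter.mp hm
    have hne : mu.parts ≠ 0 := parts_ne mu hk (by omega)
    have h1 := sup_pos mu hne
    refine Finset.mem_filter.mpr ⟨Finset.mem_univ _, ?_, Multiset.mem_cons_self _ _⟩
    show Multiset.card (1 ::ₘ mu.parts) + (1 ::ₘ mu.parts).sup = m + 3
    rw [Multiset.card_cons, Multiset.sup_cons, sup_eq_right.mpr (by omega : (1:ℕ) ≤ mu.parts.sup)]
    omega
  · intro lam hl
    obtain ⟨-, _, h1⟩ := Finset.mem_filter.mp hl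
    apply Nat.Partition.ext
    show 1 ::ₘ lam.parts.erase 1 = lam.parts
    exact Multiset.cons_erase h1
  · intro mu _
    apply Nat.Partition.ext
    show (1 ::ₘ mu.parts).erase 1 = mu.parts
    exact Multiset.erase_cons_head _ _

lemma parts_of_one (lam : Nat.Partition 1) : lam.parts = {1} := by
  have hs := lam.parts_sum
  have hne : lam.parts ≠ 0 := by intro h0; rw [h0] at hs; simp at hs
  obtain ⟨a, ha⟩ := Multiset.exists_mem_of_ne_zero hne
  have hc := Multiset.cons_erase ha
  have hsum : a + (lam.parts.erase a).sum = 1 := by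
    rw [← Multiset.sum_cons, hc, hs]
  have hapos : 0 < a := lam.parts_pos ha
  have ha1 : a = 1 := by omega
  have he : (lam.parts.erase a).sum = 0 := by omega
  have he0 : lam.parts.erase a = 0 := by
    by_contra h0
    obtain ⟨b, hb⟩ := Multiset.exists_mem_of_ne_zero h0
    have := lam.parts_pos (Multiset.mem_of_mem_erase hb)
    have := Multiset.single_le_sum (fun x _ => Nat.zero_le x) _ hb
    omega
  rw [← hc, he0, ha1]; rfl

lemma A_zero {k : ℕ} (hk : 1 ≤ k) : A k 0 = 0 := by
  rw [A, Finset.card_eq_zero, Finset.filter_eq_empty_iff]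
  intro lam _
  have hs := lam.parts_sum
  have h0 : lam.parts = 0 := by
    by_contra h0
    obtain ⟨b, hb⟩ := Multiset.exists_mem_of_ne_zero h0
    have := lam.parts_pos hb
    have := Multiset.single_le_sum (fun x _ => Nat.zero_le x) _ hb
    omega
  rw [h0]; simp; omega

lemma A_one {k : ℕ} (hk : k ≠ 2) : A k 1 = 0 := by
  rw [A, Finset.card_eq_zero, Finset.filter_eq_empty_iff]
  intro lam _
  rw [parts_of_one lam]
  simp
  omega

lemma A_two_one : A 2 1 = 1 := by
  rw [A]
  rw [Finset.filter_true_of_mem (fun lam _ => by rw [parts_of_one lam]; rfl)]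
  simp [Finset.card_univ]

lemma A_two {j : ℕ} (hj : 2 ≤ j) : A 2 j = 0 := by
  rw [A, Finset.card_eq_zero, Finset.filter_eq_empty_iff]
  intro lam _ h
  have hs := lam.parts_sum
  have hne : lam.parts ≠ 0 := by
    intro h0; rw [h0] at hs; simp at hs; omega
  have hsup : lam.parts.sup ∈ lam.parts := sup_mem hne
  have h1 : 0 < lam.parts.sup := lam.parts_pos hsup
  have h2 : 1 ≤ Multiset.card lam.parts := by
    rwa [Nat.one_le_iff_ne_zero, Ne, Multiset.card_eq_zero]
  have hcard : Multiset.card lam.parts = 1 := by omega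
  obtain ⟨a, ha⟩ := Multiset.card_eq_one.mp hcard
  rw [ha] at hs h
  simp at hs h
  omega

lemma A_big {k j : ℕ} (h : k * k < j) : A k j = 0 := by
  rw [A, Finset.card_eq_zero, Finset.filter_eq_empty_iff]
  intro lam _ hl
  have hs := lam.parts_sum
  have hle : lam.parts.sum ≤ Multiset.card lam.parts • lam.parts.sup :=
    Multiset.sum_le_card_nsmul _ _ (fun x hx => Multiset.le_sup hx)
  rw [smul_eq_mul] at hle
  have h1 : Multiset.card lam.parts ≤ k := by omega
  have h2 : lam.parts.sup ≤ k := by omega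
  have := Nat.mul_le_mul h1 h2
  omega

/-- decrement the unique largest part -/
def decTop {n : ℕ} (lam : Nat.Partition (n+1)) (h2 : 2 ≤ lam.parts.sup) :
    Nat.Partition n where
  parts := (lam.parts.sup - 1) ::ₘ lam.parts.erase lam.parts.sup
  parts_pos := by
    intro i hi
    rcases Multiset.mem_cons.mp hi with rfl | hi
    · omega
    · exact lam.parts_pos (Multiset.mem_of_mem_erase hi)
  parts_sum := by
    have hne : lam.parts ≠ 0 := by
      intro h0; rw [h0] at h2; simp at h2
    have := sum_eq lam hne
    rw [Multiset.sum_cons]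
    omega

/-- increment the largest part -/
def incTop {n : ℕ} (lam : Nat.Partition n) (h : lam.parts ≠ 0) :
    Nat.Partition (n+1) where
  parts := (lam.parts.sup + 1) ::ₘ lam.parts.erase lam.parts.sup
  parts_pos := by
    intro i hi
    rcases Multiset.mem_cons.mp hi with rfl | hi
    · omega
    · exact lam.parts_pos (Multiset.mem_of_mem_erase hi)
  parts_sum := by
    have := sum_eq lam h
    rw [Multiset.sum_cons]
    omega

lemma cardB (m t : ℕ) :
    ((Finset.univ : Finset (Nat.Partition (t+2))).filter fun lam =>
      (Multiset.card lam.parts + lam.parts.sup = m+3) ∧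
        lam.parts.count lam.parts.sup = 1).card = A (m+2) (t+1) := by
  rw [A]
  refine Finset.card_bij'
    (fun lam hl => decTop lam
      (sup_two lam (Finset.mem_filter.mp hl).2.1 (Finset.mem_filter.mp hl).2.2))
    (fun mu hm => incTop mu
      (parts_ne mu (Finset.mem_filter.mp hm).2 (by omega)))
    ?_ ?_ ?_ ?_
  · -- hi : image in target filter
    intro lam hl
    obtain ⟨-, hk, hc⟩ := Finset.mem_filter.mp hl
    have h2 := sup_two lam hk hc
    have hne : lam.parts ≠ 0 := parts_ne lam hk (by omega)
    refine Finset.mem_filter.mpr ⟨Finset.mem_univ _, ?_⟩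
    show Multiset.card ((lam.parts.sup - 1) ::ₘ lam.parts.erase lam.parts.sup) +
      ((lam.parts.sup - 1) ::ₘ lam.parts.erase lam.parts.sup).sup = m + 2
    rw [sup_cons_of_le (erase_sup_le hc), Multiset.card_cons]
    have := card_eq lam hne
    omega
  · -- hj
    intro mu hm
    obtain ⟨-, hk⟩ := Finset.mem_filter.mp hm
    have hne : mu.parts ≠ 0 := parts_ne mu hk (by omega)
    have h1 := sup_pos mu hne
    refine Finset.mem_filter.mpr ⟨Finset.mem_univ _, ?_, ?_⟩
    · show Multiset.card ((mu.parts.sup + 1) ::ₘ mu.parts.erase mu.parts.sup) +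
        ((mu.parts.sup + 1) ::ₘ mu.parts.erase mu.parts.sup).sup = m + 3
      rw [sup_cons_of_le (fun x hx => by have := erase_le_sup x hx; omega),
        Multiset.card_cons]
      have := card_eq mu hne
      omega
    · show Multiset.count (((mu.parts.sup + 1) ::ₘ mu.parts.erase mu.parts.sup).sup)
        ((mu.parts.sup + 1) ::ₘ mu.parts.erase mu.parts.sup) = 1
      rw [sup_cons_of_le (fun x hx => by have := erase_le_sup x hx; omega),
        Multiset.count_cons_self,
        Multiset.count_eq_zero.mpr (fun hmem => by
          have := erase_le_sup _ hmem; omega)]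
  · -- left inverse
    intro lam hl
    obtain ⟨-, hk, hc⟩ := Finset.mem_filter.mp hl
    have h2 := sup_two lam hk hc
    have hne : lam.parts ≠ 0 := parts_ne lam hk (by omega)
    apply Nat.Partition.ext
    show ((decTop lam _).parts.sup + 1) ::ₘ
      (decTop lam _).parts.erase (decTop lam _).parts.sup = lam.parts
    have hsup : (decTop lam (sup_two lam hk hc)).parts.sup = lam.parts.sup - 1 := by
      show ((lam.parts.sup - 1) ::ₘ lam.parts.erase lam.parts.sup).sup = _
      exact sup_cons_of_le (erase_sup_le hc)
    rw [hsup]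
    show (lam.parts.sup - 1 + 1) ::ₘ
      (((lam.parts.sup - 1) ::ₘ lam.parts.erase lam.parts.sup).erase (lam.parts.sup - 1))
      = lam.parts
    rw [Multiset.erase_cons_head]
    have : lam.parts.sup - 1 + 1 = lam.parts.sup := by omega
    rw [this, Multiset.cons_erase (sup_mem hne)]
  · -- right inverse
    intro mu hm
    obtain ⟨-, hk⟩ := Finset.mem_filter.mp hm
    have hne : mu.parts ≠ 0 := parts_ne mu hk (by omega)
    have h1 := sup_pos mu hne
    apply Nat.Partition.ext
    show ((incTop mu _).parts.sup - 1) ::ₘ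
      (incTop mu _).parts.erase (incTop mu _).parts.sup = mu.parts
    have hsup : (incTop mu (parts_ne mu hk (by omega))).parts.sup = mu.parts.sup + 1 := by
      show ((mu.parts.sup + 1) ::ₘ mu.parts.erase mu.parts.sup).sup = _
      exact sup_cons_of_le (fun x hx => by have := erase_le_sup x hx; omega)
    rw [hsup]
    show (mu.parts.sup + 1 - 1) ::ₘ
      (((mu.parts.sup + 1) ::ₘ mu.parts.erase mu.parts.sup).erase (mu.parts.sup + 1))
      = mu.parts
    rw [Multiset.erase_cons_head]
    have : mu.parts.sup + 1 - 1 = mu.parts.sup := by omega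
    rw [this, Multiset.cons_erase (sup_mem hne)]

def decTopDelOne {n : ℕ} (lam : Nat.Partition (n+2)) (h2 : 2 ≤ lam.parts.sup)
    (h1 : 1 ∈ lam.parts.erase lam.parts.sup) : Nat.Partition n where
  parts := (lam.parts.sup - 1) ::ₘ (lam.parts.erase lam.parts.sup).erase 1
  parts_pos := by
    intro i hi
    rcases Multiset.mem_cons.mp hi with rfl | hi
    · omega
    · exact lam.parts_pos (Multiset.mem_of_mem_erase (Multiset.mem_of_mem_erase hi))
  parts_sum := by
    have hne : lam.parts ≠ 0 := by
      intro h0; rw [h0] at h2; simp at h2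
    have hs1 := sum_eq lam hne
    have hs2 : (1:ℕ) + ((lam.parts.erase lam.parts.sup).erase 1).sum
        = (lam.parts.erase lam.parts.sup).sum := by
      rw [← Multiset.sum_cons, Multiset.cons_erase h1]
    rw [Multiset.sum_cons]
    omega

def incTopAddOne {n : ℕ} (lam : Nat.Partition n) (h : lam.parts ≠ 0) :
    Nat.Partition (n+2) where
  parts := (lam.parts.sup + 1) ::ₘ 1 ::ₘ lam.parts.erase lam.parts.sup
  parts_pos := by
    intro i hi
    rcases Multiset.mem_cons.mp hi with rfl | hi
    · omega
    · rcases Multiset.mem_cons.mp hi with rfl | hi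
      · omega
      · exact lam.parts_pos (Multiset.mem_of_mem_erase hi)
  parts_sum := by
    have := sum_eq lam h
    rw [Multiset.sum_cons, Multiset.sum_cons]
    omega

lemma cardBC (m t : ℕ) :
    ((Finset.univ : Finset (Nat.Partition (t+2))).filter fun lam =>
      (Multiset.card lam.parts + lam.parts.sup = m+3) ∧
        (lam.parts.count lam.parts.sup = 1 ∧ 1 ∈ lam.parts)).card = A (m+1) t := by
  rw [A]
  have one_mem : ∀ (lam : Nat.Partition (t+2)),
      (Multiset.card lam.parts + lam.parts.sup = m+3) →
      lam.parts.count lam.parts.sup = 1 → 1 ∈ lam.parts →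
      1 ∈ lam.parts.erase lam.parts.sup := by
    intro lam hk hc h1
    have h2 := sup_two lam hk hc
    rw [← Multiset.count_pos, Multiset.count_erase_of_ne (by omega)]
    rwa [Multiset.count_pos]
  refine Finset.card_bij'
    (fun lam hl => decTopDelOne lam
      (sup_two lam (Finset.mem_filter.mp hl).2.1 (Finset.mem_filter.mp hl).2.2.1)
      (one_mem lam (Finset.mem_filter.mp hl).2.1 (Finset.mem_filter.mp hl).2.2.1
        (Finset.mem_filter.mp hl).2.2.2))
    (fun mu hm => incTopAddOne mu
      (parts_ne mu (Finset.mem_filter.mp hm).2 (by omega)))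
    ?_ ?_ ?_ ?_
  · intro lam hl
    obtain ⟨-, hk, hc, h1⟩ := Finset.mem_filter.mp hl
    have h2 := sup_two lam hk hc
    have hne : lam.parts ≠ 0 := parts_ne lam hk (by omega)
    have h1e := one_mem lam hk hc h1
    refine Finset.mem_filter.mpr ⟨Finset.mem_univ _, ?_⟩
    show Multiset.card ((lam.parts.sup - 1) ::ₘ (lam.parts.erase lam.parts.sup).erase 1) +
      ((lam.parts.sup - 1) ::ₘ (lam.parts.erase lam.parts.sup).erase 1).sup = m + 1
    rw [sup_cons_of_le (fun x hx => erase_sup_le hc x (Multiset.mem_of_mem_erase hx)),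
      Multiset.card_cons, Multiset.card_erase_of_mem h1e, Nat.pred_eq_sub_one]
    have hce := card_eq lam hne
    have hcard1 : 1 ≤ Multiset.card (lam.parts.erase lam.parts.sup) :=
      Multiset.card_pos.mpr (by intro h0; rw [h0] at h1e; simp at h1e)
    omega
  · intro mu hm
    obtain ⟨-, hk⟩ := Finset.mem_filter.mp hm
    have hne : mu.parts ≠ 0 := parts_ne mu hk (by omega)
    have h1 := sup_pos mu hne
    have hbound : ∀ x ∈ (1 : ℕ) ::ₘ mu.parts.erase mu.parts.sup, x ≤ mu.parts.sup + 1 := by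
      intro x hx
      rcases Multiset.mem_cons.mp hx with rfl | hx
      · omega
      · have := erase_le_sup x hx; omega
    have hsup : ((mu.parts.sup + 1) ::ₘ 1 ::ₘ mu.parts.erase mu.parts.sup).sup
        = mu.parts.sup + 1 := sup_cons_of_le hbound
    refine Finset.mem_filter.mpr ⟨Finset.mem_univ _, ?_, ?_, ?_⟩
    · show Multiset.card ((mu.parts.sup + 1) ::ₘ 1 ::ₘ mu.parts.erase mu.parts.sup) +
        ((mu.parts.sup + 1) ::ₘ 1 ::ₘ mu.parts.erase mu.parts.sup).sup = m + 3
      rw [hsup, Multiset.card_cons, Multiset.card_cons]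
      have := card_eq mu hne
      omega
    · show Multiset.count (((mu.parts.sup + 1) ::ₘ 1 ::ₘ mu.parts.erase mu.parts.sup).sup)
        ((mu.parts.sup + 1) ::ₘ 1 ::ₘ mu.parts.erase mu.parts.sup) = 1
      rw [hsup, Multiset.count_cons_self,
        Multiset.count_eq_zero.mpr (fun hmem => by
          rcases Multiset.mem_cons.mp hmem with h' | h'
          · omega
          · have := erase_le_sup _ h'; omega)]
    · show (1 : ℕ) ∈ (mu.parts.sup + 1) ::ₘ 1 ::ₘ mu.parts.erase mu.parts.sup
      exact Multiset.mem_cons_of_mem (Multiset.mem_cons_self _ _)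
  · intro lam hl
    obtain ⟨-, hk, hc, h1⟩ := Finset.mem_filter.mp hl
    have h2 := sup_two lam hk hc
    have hne : lam.parts ≠ 0 := parts_ne lam hk (by omega)
    have h1e := one_mem lam hk hc h1
    apply Nat.Partition.ext
    set d := decTopDelOne lam (sup_two lam hk hc) (one_mem lam hk hc h1) with hd
    show (d.parts.sup + 1) ::ₘ 1 ::ₘ d.parts.erase d.parts.sup = lam.parts
    have hdp : d.parts
        = (lam.parts.sup - 1) ::ₘ (lam.parts.erase lam.parts.sup).erase 1 := rfl
    have hsup : d.parts.sup = lam.parts.sup - 1 := by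
      rw [hdp]
      exact sup_cons_of_le (fun x hx => erase_sup_le hc x (Multiset.mem_of_mem_erase hx))
    rw [hsup, hdp]
    have e1 : lam.parts.sup - 1 + 1 = lam.parts.sup := by omega
    rw [Multiset.erase_cons_head, e1, Multiset.cons_erase h1e,
      Multiset.cons_erase (sup_mem hne)]
  · intro mu hm
    obtain ⟨-, hk⟩ := Finset.mem_filter.mp hm
    have hne : mu.parts ≠ 0 := parts_ne mu hk (by omega)
    have h1 := sup_pos mu hne
    apply Nat.Partition.ext
    set d := incTopAddOne mu (parts_ne mu hk (by omega)) with hd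
    show (d.parts.sup - 1) ::ₘ (d.parts.erase d.parts.sup).erase 1 = mu.parts
    have hdp : d.parts = (mu.parts.sup + 1) ::ₘ 1 ::ₘ mu.parts.erase mu.parts.sup := rfl
    have hsup : d.parts.sup = mu.parts.sup + 1 := by
      rw [hdp]
      refine sup_cons_of_le ?_
      intro x hx
      rcases Multiset.mem_cons.mp hx with rfl | hx
      · omega
      · have := erase_le_sup x hx; omega
    rw [hsup, hdp, Multiset.erase_cons_head, Multiset.erase_cons_head]
    have e1 : mu.parts.sup + 1 - 1 = mu.parts.sup := by omega
    rw [e1, Multiset.cons_erase (sup_mem hne)]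

lemma sum_map_pred {e : Multiset ℕ} (h : ∀ x ∈ e, 1 ≤ x) :
    (e.map (· - 1)).sum + Multiset.card e = e.sum := by
  induction e using Multiset.induction_on with
  | empty => simp
  | cons a s ih =>
    have ha := h a (Multiset.mem_cons_self a s)
    have ihs := ih (fun x hx => h x (Multiset.mem_cons_of_mem hx))
    simp only [Multiset.map_cons, Multiset.sum_cons, Multiset.card_cons]
    omega

lemma sum_map_succ (e : Multiset ℕ) : (e.map (· + 1)).sum = e.sum + Multiset.card e := by
  induction e using Multiset.induction_on with
  | empty => simp
  | cons a s ih =>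
    simp only [Multiset.map_cons, Multiset.sum_cons, Multiset.card_cons, ih]
    omega

lemma map_pred_succ {e : Multiset ℕ} (h : ∀ x ∈ e, 1 ≤ x) :
    (e.map (· - 1)).map (· + 1) = e := by
  rw [Multiset.map_map]
  rw [show e = Multiset.map id e from (Multiset.map_id e).symm]
  rw [Multiset.map_map]
  exact Multiset.map_congr rfl (fun x hx => by have := h x (by simpa using hx); simp; omega)

lemma map_succ_pred (e : Multiset ℕ) : (e.map (· + 1)).map (· - 1) = e := by
  rw [Multiset.map_map]
  rw [show e = Multiset.map id e from (Multiset.map_id e).symm]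
  rw [Multiset.map_map]
  exact Multiset.map_congr rfl (fun x hx => by simp)

def hookDown {n u : ℕ} (lam : Nat.Partition n) (hpos : ∀ x ∈ lam.parts, 2 ≤ x)
    (hsum : ((lam.parts.erase lam.parts.sup).map (· - 1)).sum = u) : Nat.Partition u where
  parts := (lam.parts.erase lam.parts.sup).map (· - 1)
  parts_pos := by
    intro i hi
    obtain ⟨y, hy, rfl⟩ := Multiset.mem_map.mp hi
    have := hpos y (Multiset.mem_of_mem_erase hy)
    omega
  parts_sum := hsum

def hookUp {u n : ℕ} (mu : Nat.Partition u)
    (hsum : ((mu.parts.sup + 1) ::ₘ mu.parts.map (· + 1)).sum = n) : Nat.Partition n where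
  parts := (mu.parts.sup + 1) ::ₘ mu.parts.map (· + 1)
  parts_pos := by
    intro i hi
    rcases Multiset.mem_cons.mp hi with rfl | hi
    · omega
    · obtain ⟨y, hy, rfl⟩ := Multiset.mem_map.mp hi
      omega
  parts_sum := hsum

lemma cardD (m t : ℕ) :
    ((Finset.univ : Finset (Nat.Partition (t+2))).filter fun lam =>
      (Multiset.card lam.parts + lam.parts.sup = m+3) ∧
        (¬ lam.parts.count lam.parts.sup = 1 ∧ ¬ 1 ∈ lam.parts)).card
      = A (m+1) (t - m) := by
  rw [A]
  -- facts for elements of the source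
  have facts : ∀ (lam : Nat.Partition (t+2)),
      (Multiset.card lam.parts + lam.parts.sup = m+3) →
      ¬ lam.parts.count lam.parts.sup = 1 → ¬ 1 ∈ lam.parts →
      (∀ x ∈ lam.parts, 2 ≤ x) ∧ 2 ≤ lam.parts.sup ∧
        lam.parts.sup ∈ lam.parts.erase lam.parts.sup ∧
        ((lam.parts.erase lam.parts.sup).map (· - 1)).sum = t - m := by
    intro lam hk hc h1
    have hne : lam.parts ≠ 0 := parts_ne lam hk (by omega)
    have hpos : ∀ x ∈ lam.parts, 2 ≤ x := by
      intro x hx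
      have := lam.parts_pos hx
      rcases Nat.lt_or_ge x 2 with h | h
      · have hx1 : x = 1 := by omega
        exact absurd (hx1 ▸ hx) h1
      · exact h
    have hs2 : 2 ≤ lam.parts.sup := hpos _ (sup_mem hne)
    have hcnt : 1 ≤ lam.parts.count lam.parts.sup :=
      Multiset.count_pos.mpr (sup_mem hne)
    have hmem2 : lam.parts.sup ∈ lam.parts.erase lam.parts.sup := by
      rw [← Multiset.count_pos, Multiset.count_erase_self]
      omega
    refine ⟨hpos, hs2, hmem2, ?_⟩
    have h1' : ∀ x ∈ lam.parts.erase lam.parts.sup, 1 ≤ x :=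
      fun x hx => lam.parts_pos (Multiset.mem_of_mem_erase hx)
    have hsm := sum_map_pred h1'
    have hsum := sum_eq lam hne
    have hcard := card_eq lam hne
    omega
  refine Finset.card_bij'
    (fun lam hl => hookDown lam
      (facts lam (Finset.mem_filter.mp hl).2.1 (Finset.mem_filter.mp hl).2.2.1
        (Finset.mem_filter.mp hl).2.2.2).1
      (facts lam (Finset.mem_filter.mp hl).2.1 (Finset.mem_filter.mp hl).2.2.1
        (Finset.mem_filter.mp hl).2.2.2).2.2.2)
    (fun mu hm => hookUp mu (by
      obtain ⟨-, hk⟩ := Finset.mem_filter.mp hm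
      have hne : mu.parts ≠ 0 := parts_ne mu hk (by omega)
      have hsum := mu.parts_sum
      have hpos : 1 ≤ mu.parts.sum := by
        obtain ⟨b, hb⟩ := Multiset.exists_mem_of_ne_zero hne
        have := mu.parts_pos hb
        have := Multiset.single_le_sum (fun x _ => Nat.zero_le x) _ hb
        omega
      rw [Multiset.sum_cons, sum_map_succ, hsum]
      omega))
    ?_ ?_ ?_ ?_
  · intro lam hl
    obtain ⟨-, hk, hc, h1⟩ := Finset.mem_filter.mp hl
    obtain ⟨hpos, hs2, hmem2, hsum⟩ := facts lam hk hc h1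
    have hne : lam.parts ≠ 0 := parts_ne lam hk (by omega)
    refine Finset.mem_filter.mpr ⟨Finset.mem_univ _, ?_⟩
    show Multiset.card ((lam.parts.erase lam.parts.sup).map (· - 1)) +
      ((lam.parts.erase lam.parts.sup).map (· - 1)).sup = m + 1
    have hsupw : ((lam.parts.erase lam.parts.sup).map (· - 1)).sup = lam.parts.sup - 1 := by
      apply le_antisymm
      · rw [Multiset.sup_le]
        intro x hx
        obtain ⟨y, hy, rfl⟩ := Multiset.mem_map.mp hx
        have := erase_le_sup y hy
        omega
      · exact Multiset.le_sup (Multiset.mem_map_of_mem _ hmem2)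
    rw [hsupw, Multiset.card_map]
    have := card_eq lam hne
    omega
  · intro mu hm
    obtain ⟨-, hk⟩ := Finset.mem_filter.mp hm
    have hne : mu.parts ≠ 0 := parts_ne mu hk (by omega)
    have hv := sup_pos mu hne
    have hbound : ∀ x ∈ mu.parts.map (· + 1), x ≤ mu.parts.sup + 1 := by
      intro x hx
      obtain ⟨y, hy, rfl⟩ := Multiset.mem_map.mp hx
      have := Multiset.le_sup hy
      omega
    have hsupj : ((mu.parts.sup + 1) ::ₘ mu.parts.map (· + 1)).sup = mu.parts.sup + 1 :=
      sup_cons_of_le hbound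
    refine Finset.mem_filter.mpr ⟨Finset.mem_univ _, ?_, ?_, ?_⟩
    · show Multiset.card ((mu.parts.sup + 1) ::ₘ mu.parts.map (· + 1)) +
        ((mu.parts.sup + 1) ::ₘ mu.parts.map (· + 1)).sup = m + 3
      rw [hsupj, Multiset.card_cons, Multiset.card_map]
      omega
    · show ¬ Multiset.count (((mu.parts.sup + 1) ::ₘ mu.parts.map (· + 1)).sup)
        ((mu.parts.sup + 1) ::ₘ mu.parts.map (· + 1)) = 1
      rw [hsupj, Multiset.count_cons_self,
        Multiset.count_map_eq_count' _ _ (add_left_injective 1)]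
      have := Multiset.count_pos.mpr (sup_mem hne)
      omega
    · show ¬ (1 : ℕ) ∈ (mu.parts.sup + 1) ::ₘ mu.parts.map (· + 1)
      intro hmem
      rcases Multiset.mem_cons.mp hmem with h' | h'
      · omega
      · obtain ⟨y, hy, hy1⟩ := Multiset.mem_map.mp h'
        have := mu.parts_pos hy
        omega
  · intro lam hl
    obtain ⟨-, hk, hc, h1⟩ := Finset.mem_filter.mp hl
    obtain ⟨hpos, hs2, hmem2, hsum⟩ := facts lam hk hc h1
    have hne : lam.parts ≠ 0 := parts_ne lam hk (by omega)
    apply Nat.Partition.ext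
    set d := hookDown lam (facts lam hk hc h1).1 (facts lam hk hc h1).2.2.2 with hd
    show (d.parts.sup + 1) ::ₘ d.parts.map (· + 1) = lam.parts
    have hdp : d.parts = (lam.parts.erase lam.parts.sup).map (· - 1) := rfl
    have hsupw : d.parts.sup = lam.parts.sup - 1 := by
      rw [hdp]
      apply le_antisymm
      · rw [Multiset.sup_le]
        intro x hx
        obtain ⟨y, hy, rfl⟩ := Multiset.mem_map.mp hx
        have := erase_le_sup y hy
        omega
      · exact Multiset.le_sup (Multiset.mem_map_of_mem _ hmem2)
    rw [hsupw, hdp, map_pred_succ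
      (fun x hx => lam.parts_pos (Multiset.mem_of_mem_erase hx))]
    have e1 : lam.parts.sup - 1 + 1 = lam.parts.sup := by omega
    rw [e1, Multiset.cons_erase (sup_mem hne)]
  · intro mu hm
    obtain ⟨-, hk⟩ := Finset.mem_filter.mp hm
    have hne : mu.parts ≠ 0 := parts_ne mu hk (by omega)
    have hv := sup_pos mu hne
    apply Nat.Partition.ext
    show ((_ : Nat.Partition (t+2)).parts.erase _).map (· - 1) = mu.parts
    have hbound : ∀ x ∈ mu.parts.map (· + 1), x ≤ mu.parts.sup + 1 := by
      intro x hx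
      obtain ⟨y, hy, rfl⟩ := Multiset.mem_map.mp hx
      have := Multiset.le_sup hy
      omega
    have hsupj : ((mu.parts.sup + 1) ::ₘ mu.parts.map (· + 1)).sup = mu.parts.sup + 1 :=
      sup_cons_of_le hbound
    show ((((mu.parts.sup + 1) ::ₘ mu.parts.map (· + 1)) :
        Multiset ℕ).erase (((mu.parts.sup + 1) ::ₘ mu.parts.map (· + 1)).sup)).map (· - 1)
      = mu.parts
    rw [hsupj, Multiset.erase_cons_head, map_succ_pred]

lemma key_count (m t : ℕ) :
    A (m+3) (t+2) + A (m+1) t = 2 * A (m+2) (t+1) + A (m+1) (t - m) := by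
  classical
  set S : Finset (Nat.Partition (t+2)) :=
    Finset.univ.filter fun lam => Multiset.card lam.parts + lam.parts.sup = m+3 with hS
  set c : Nat.Partition (t+2) → Prop := fun lam => lam.parts.count lam.parts.sup = 1 with hc
  set q : Nat.Partition (t+2) → Prop := fun lam => 1 ∈ lam.parts with hq
  have e1 : (S.filter c).card + (S.filter q).card
      = (S.filter fun l => c l ∨ q l).card + (S.filter fun l => c l ∧ q l).card := by
    rw [Finset.filter_or, Finset.filter_and]
    exact (Finset.card_union_add_card_inter _ _).symm
  have e2 : (S.filter fun l => c l ∨ q l).card + (S.filter fun l => ¬(c l ∨ q l)).card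
      = S.card := Finset.card_filter_add_card_filter_not _
  have e3 : (S.filter fun l => ¬(c l ∨ q l)) = (S.filter fun l => ¬ c l ∧ ¬ q l) := by
    apply Finset.filter_congr
    intro x _
    simp [not_or]
  have b1 : (S.filter c).card = A (m+2) (t+1) := by
    rw [hS, Finset.filter_filter]
    exact cardB m t
  have b2 : (S.filter q).card = A (m+2) (t+1) := by
    rw [hS, Finset.filter_filter]
    exact cardC m t
  have b3 : (S.filter fun l => c l ∧ q l).card = A (m+1) t := by
    rw [hS, Finset.filter_filter]
    exact cardBC m t
  have b4 : (S.filter fun l => ¬ c l ∧ ¬ q l).card = A (m+1) (t - m) := by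
    rw [hS, Finset.filter_filter]
    exact cardD m t
  have b0 : S.card = A (m+3) (t+2) := by
    rw [hS, A]
  rw [e3, b4] at e2
  omega

lemma coeff_gp {k : ℕ} (hk : 1 ≤ k) (t : ℕ) : (gp k).coeff t = (A k t : ℚ) := by
  rw [gp, Polynomial.finset_sum_coeff]
  simp only [Polynomial.coeff_smul, Polynomial.coeff_X_pow, smul_eq_mul,
    mul_ite, mul_one, mul_zero]
  rw [Finset.sum_ite_eq (Finset.Icc 1 (k*k)) t (fun j => (A k j : ℚ))]
  by_cases ht : t ∈ Finset.Icc 1 (k*k)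
  · rw [if_pos ht]
  · rw [if_neg ht]
    rw [Finset.mem_Icc] at ht
    push_neg at ht
    rcases Nat.eq_zero_or_pos t with rfl | h1
    · rw [A_zero hk]; simp
    · rw [A_big (ht h1)]; simp

lemma gp_zero : gp 0 = 0 := by simp [gp]

lemma gp_one : gp 1 = 0 := by
  simp [gp, A_one]

lemma gp_two : gp 2 = Polynomial.X := by
  ext t
  rw [coeff_gp (by norm_num) t]
  match t with
  | 0 => simp [A_zero]
  | 1 => simp [A_two_one]
  | (u+2) => rw [A_two (by omega)]; simp [Polynomial.coeff_X]

lemma key_poly (m : ℕ) :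
    gp (m+3) + gp (m+1) * Polynomial.X ^ 2
      = gp (m+2) * Polynomial.X ^ 1 + gp (m+2) * Polynomial.X ^ 1
        + gp (m+1) * Polynomial.X ^ (m+2) := by
  ext t
  rw [Polynomial.coeff_add, Polynomial.coeff_add, Polynomial.coeff_add,
    Polynomial.coeff_mul_X_pow', Polynomial.coeff_mul_X_pow', Polynomial.coeff_mul_X_pow', coeff_gp (by omega)]
  match t with
  | 0 => simp [A_zero]
  | 1 =>
      simp only [if_pos (le_refl 1), if_neg (by omega : ¬ 2 ≤ 1),
        if_neg (by omega : ¬ m + 2 ≤ 1)]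
      rw [A_one (by omega), coeff_gp (by omega), A_zero (by omega)]
      simp
  | (u+2) =>
      have h2 : 2 ≤ u + 2 := by omega
      have h1 : 1 ≤ u + 2 := by omega
      rw [if_pos h2, if_pos h1, coeff_gp (by omega), coeff_gp (by omega)]
      have hkey := key_count m u
      by_cases hm : m + 2 ≤ u + 2
      · rw [if_pos hm, coeff_gp (by omega)]
        have : u + 2 - 2 = u := by omega
        rw [this]
        have h3 : u + 2 - 1 = u + 1 := by omega
        rw [h3]
        have h4 : u + 2 - (m + 2) = u - m := by omega
        rw [h4]
        push_cast
        have hq : (A (m+3) (u+2) : ℚ) + A (m+1) u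
            = 2 * A (m+2) (u+1) + A (m+1) (u-m) := by exact_mod_cast hkey
        linarith [hq]
      · rw [if_neg hm]
        have hum : u - m = 0 := by omega
        rw [hum, A_zero (by omega)] at hkey
        have : u + 2 - 2 = u := by omega
        rw [this]
        have h3 : u + 2 - 1 = u + 1 := by omega
        rw [h3]
        push_cast
        have hq : (A (m+3) (u+2) : ℚ) + A (m+1) u
            = 2 * A (m+2) (u+1) + 0 := by exact_mod_cast hkey
        linarith [hq]


end Stmt14Aux

/-- With `G` the Ferrers-diagram generating function and `G(qx)`
obtained from `G` by the substitution `x ↦ q·x`, we have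
`q·x²·G(qx) - (1 - q·x)²·G + q·x² = 0` in `ℚ[q]⟦x⟧`. -/
theorem stmt_14 :
    PowerSeries.C (R := Polynomial ℚ) Polynomial.X * PowerSeries.X ^ 2 *
        PowerSeries.rescale Polynomial.X ferrersGF
      - (1 - PowerSeries.C (R := Polynomial ℚ) Polynomial.X * PowerSeries.X) ^ 2 * ferrersGF
      + PowerSeries.C (R := Polynomial ℚ) Polynomial.X * PowerSeries.X ^ 2 = 0 := by
  have hXp : ∀ (d : ℕ) (f : PowerSeries (Polynomial ℚ)) (n : ℕ),
      PowerSeries.coeff n (PowerSeries.X ^ d * f)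
        = if d ≤ n then PowerSeries.coeff (n - d) f else 0 := by
    intro d f n
    rw [mul_comm, PowerSeries.coeff_mul_X_pow']
  have hring : (1 - PowerSeries.C (R := Polynomial ℚ) Polynomial.X * PowerSeries.X) ^ 2 * ferrersGF
      = ferrersGF
        - (PowerSeries.C (R := Polynomial ℚ) Polynomial.X * (PowerSeries.X ^ 1 * ferrersGF)
            + PowerSeries.C (R := Polynomial ℚ) Polynomial.X * (PowerSeries.X ^ 1 * ferrersGF))
        + PowerSeries.C (R := Polynomial ℚ) (Polynomial.X * Polynomial.X)
            * (PowerSeries.X ^ 2 * ferrersGF) := by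
    rw [map_mul]; ring
  rw [sub_add_eq_add_sub, sub_eq_zero, hring, mul_assoc]
  refine PowerSeries.ext fun n => ?_
  rw [map_add, map_add, map_sub, map_add]
  simp only [PowerSeries.coeff_C_mul, hXp, PowerSeries.coeff_X_pow,
    PowerSeries.coeff_rescale, Stmt14Aux.coeffG]
  match n with
  | 0 => simp [Stmt14Aux.gp_zero]
  | 1 => simp [Stmt14Aux.gp_zero, Stmt14Aux.gp_one]
  | 2 => simp [Stmt14Aux.gp_zero, Stmt14Aux.gp_one, Stmt14Aux.gp_two]
  | (m+3) =>
      have h1 : (1 : ℕ) ≤ m + 3 := by omega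
      have h2 : (2 : ℕ) ≤ m + 3 := by omega
      rw [if_pos h2, if_pos h1, if_pos h2, if_neg (by omega : ¬ m + 3 = 2)]
      have e1 : m + 3 - 2 = m + 1 := by omega
      have e2 : m + 3 - 1 = m + 2 := by omega
      rw [e1, e2]
      have hk := Stmt14Aux.key_poly m
      rw [pow_one] at hk
      linear_combination -hk
end

section
/- There exists exactly one formal power series y in the ring ℚ[q]⟦x⟧ of formal power series in x with coefficients in the polynomial ring ℚ[q] such that y has zero constant term and y(qx)·y + (2·x·q - 1)·y + x²·q = 0, where y(qx) denotes the series obtained from y by the substitution x ↦ q·x. -/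
open PowerSeries Finset

noncomputable def stmt15aux : ℕ → Polynomial ℚ
  | 0 => 0
  | (n+1) => (∑ k ∈ (Finset.range n).attach,
        Polynomial.X^(k.1+1) * stmt15aux (k.1+1) * stmt15aux (n-k.1))
      + 2 * Polynomial.X * stmt15aux n + if n + 1 = 2 then Polynomial.X else 0
  decreasing_by
  · have := k.2; simp only [Finset.mem_range] at this; omega
  · omega
  · omega

lemma stmt15aux_succ (n : ℕ) :
    stmt15aux (n+1) = (∑ k ∈ Finset.range n,
        Polynomial.X^(k+1) * stmt15aux (k+1) * stmt15aux (n-k))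
      + 2 * Polynomial.X * stmt15aux n + if n + 1 = 2 then Polynomial.X else 0 := by
  rw [stmt15aux, Finset.sum_attach (Finset.range n)
    (fun k => Polynomial.X^(k+1) * stmt15aux (k+1) * stmt15aux (n-k))]

section

variable (y : PowerSeries (Polynomial ℚ))

noncomputable def stmt15LHS : PowerSeries (Polynomial ℚ) :=
  PowerSeries.rescale Polynomial.X y * y
    + 2 * (PowerSeries.X * (PowerSeries.C Polynomial.X * y))
    + PowerSeries.X ^ 2 * PowerSeries.C Polynomial.X

lemma stmt15_sum_anti (hy0 : PowerSeries.coeff 0 y = 0) (m : ℕ) :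
    ∑ p ∈ antidiagonal (m+1),
        Polynomial.X ^ p.1 * PowerSeries.coeff p.1 y
          * PowerSeries.coeff p.2 y
      = ∑ k ∈ Finset.range m,
        Polynomial.X ^ (k+1) * PowerSeries.coeff (k+1) y
          * PowerSeries.coeff (m-k) y := by
  rw [Finset.Nat.sum_antidiagonal_eq_sum_range_succ_mk]
  rw [Finset.sum_range_succ', Finset.sum_range_succ]
  simp [hy0, Nat.succ_sub_succ]

lemma stmt15_coeff_zero (hy0 : PowerSeries.coeff 0 y = 0) :
    PowerSeries.coeff 0 (stmt15LHS y) = 0 := by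
  rw [stmt15LHS]
  rw [PowerSeries.coeff_zero_eq_constantCoeff] at hy0 ⊢
  simp [map_add, map_mul, hy0]

lemma stmt15_coeff_succ (hy0 : PowerSeries.coeff 0 y = 0) (m : ℕ) :
    PowerSeries.coeff (m+1) (stmt15LHS y)
      = (∑ k ∈ Finset.range m,
          Polynomial.X ^ (k+1) * PowerSeries.coeff (k+1) y
            * PowerSeries.coeff (m-k) y)
        + 2 * Polynomial.X * PowerSeries.coeff m y
        + if m + 1 = 2 then Polynomial.X else 0 := by
  rw [stmt15LHS, map_add, map_add]
  have h1 : PowerSeries.coeff (m+1)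
      (PowerSeries.rescale Polynomial.X y * y)
      = ∑ p ∈ antidiagonal (m+1),
          Polynomial.X ^ p.1 * PowerSeries.coeff p.1 y
            * PowerSeries.coeff p.2 y := by
    rw [PowerSeries.coeff_mul]
    refine Finset.sum_congr rfl fun p _ => ?_
    rw [PowerSeries.coeff_rescale]
  have h2 : PowerSeries.coeff (m+1)
      (2 * (PowerSeries.X * (PowerSeries.C Polynomial.X * y)))
      = 2 * Polynomial.X * PowerSeries.coeff m y := by
    rw [two_mul, map_add, PowerSeries.coeff_succ_X_mul, PowerSeries.coeff_C_mul]
    ring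
  have h3 : PowerSeries.coeff (m+1)
      (PowerSeries.X ^ 2 * PowerSeries.C (Polynomial.X : Polynomial ℚ))
      = if m + 1 = 2 then Polynomial.X else 0 := by
    rw [mul_comm, PowerSeries.coeff_C_mul, PowerSeries.coeff_X_pow]
    split <;> simp
  rw [h1, h2, h3, stmt15_sum_anti y hy0 m]

lemma stmt15_eqn_iff (hy0 : PowerSeries.coeff 0 y = 0) :
    stmt15LHS y = y ↔ ∀ m : ℕ,
      PowerSeries.coeff (m+1) y
        = (∑ k ∈ Finset.range m,
            Polynomial.X ^ (k+1) * PowerSeries.coeff (k+1) y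
              * PowerSeries.coeff (m-k) y)
          + 2 * Polynomial.X * PowerSeries.coeff m y
          + if m + 1 = 2 then Polynomial.X else 0 := by
  constructor
  · intro h m
    rw [← stmt15_coeff_succ y hy0 m, h]
  · intro h
    ext n
    cases n with
    | zero => rw [stmt15_coeff_zero y hy0, hy0]
    | succ m => rw [stmt15_coeff_succ y hy0 m, h m]

end

/-- There is exactly one formal power series `y ∈ ℚ[q]⟦x⟧` with zero
constant term such that `y(qx)·y + (2·x·q - 1)·y + x²·q = 0`, where `y(qx)` is obtained
from `y` by the substitution `x ↦ q·x`. -/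
theorem stmt_15 :
    ∃! y : PowerSeries (Polynomial ℚ),
      PowerSeries.constantCoeff y = 0 ∧
      PowerSeries.rescale Polynomial.X y * y
        + (2 * PowerSeries.X * PowerSeries.C Polynomial.X - 1) * y
        + PowerSeries.X ^ 2 * PowerSeries.C Polynomial.X = 0 := by
  have keyiff : ∀ y : PowerSeries (Polynomial ℚ),
      (PowerSeries.rescale Polynomial.X y * y
        + (2 * PowerSeries.X * PowerSeries.C Polynomial.X - 1) * y
        + PowerSeries.X ^ 2 * PowerSeries.C Polynomial.X = 0)
      ↔ stmt15LHS y = y := by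
    intro y
    rw [stmt15LHS]
    constructor <;> intro h <;> linear_combination h
  set Y : PowerSeries (Polynomial ℚ) := PowerSeries.mk stmt15aux with hY
  have hY0 : PowerSeries.coeff 0 Y = 0 := by
    simp [hY, PowerSeries.coeff_mk, stmt15aux]
  have hYrec : ∀ m : ℕ,
      PowerSeries.coeff (m+1) Y
        = (∑ k ∈ Finset.range m,
            Polynomial.X ^ (k+1) * PowerSeries.coeff (k+1) Y
              * PowerSeries.coeff (m-k) Y)
          + 2 * Polynomial.X * PowerSeries.coeff m Y
          + if m + 1 = 2 then Polynomial.X else 0 := by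
    intro m
    simp only [hY, PowerSeries.coeff_mk]
    exact stmt15aux_succ m
  refine ⟨Y, ⟨?_, ?_⟩, ?_⟩
  · rw [← PowerSeries.coeff_zero_eq_constantCoeff]; exact hY0
  · rw [keyiff Y, stmt15_eqn_iff Y hY0]; exact hYrec
  · rintro y ⟨hy0, hyeq⟩
    rw [← PowerSeries.coeff_zero_eq_constantCoeff] at hy0
    rw [keyiff y, stmt15_eqn_iff y hy0] at hyeq
    have key : ∀ n, PowerSeries.coeff n y
        = PowerSeries.coeff n Y := by
      intro n
      induction n using Nat.strong_induction_on with
      | _ n ih =>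
        match n with
        | 0 => rw [hy0, hY0]
        | (m+1) =>
          rw [hyeq m, hYrec m, ih m (by omega)]
          congr 1
          congr 1
          refine Finset.sum_congr rfl fun k hk => ?_
          rw [Finset.mem_range] at hk
          rw [ih (k+1) (by omega), ih (m-k) (by omega)]
    exact PowerSeries.ext key
end
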